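/- arXiv:2208.06126 — 3 statements merged into one kernel-verified Lean document; each statement's English description precedes it below -/
import Mathlib

section
/- Let k and a be integers with 2 ≤ a ≤ k/3, and let B(k,a) be the broom on k vertices, i.e., the spider S_{a−1,1,…,1} with one leg of a−1 edges and k−a legs of one edge each. Then there exists n_0 such that for all n ≥ n_0, ex_c(n, B(k,a)) = ⌊(k−a)n/2⌋. -/
open SimpleGraph

/-- `G` contains a copy of `F`, i.e. a subgraph isomorphic to `F`
(given by an injective graph homomorphism). -/
def ContainsCopy {α β : Type*} (F : SimpleGraph α) (G : SimpleGraph β) : Prop :=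
  ∃ f : α ↪ β, ∀ ⦃a b : α⦄, F.Adj a b → G.Adj (f a) (f b)

/-- The connected Turán number `ex_c(n, F)`: the maximum number of edges of a
connected `F`-free simple graph on `n` vertices. -/
noncomputable def exConn {α : Type*} (n : ℕ) (F : SimpleGraph α) : ℕ :=
  sSup {m | ∃ G : SimpleGraph (Fin n), G.Connected ∧ ¬ ContainsCopy F G ∧ m = G.edgeSet.ncard}

/-- The broom `B(k,a)`: the spider `S_{a-1,1,…,1}` on `k` vertices, with center `0`,
one leg `0 - 1 - ⋯ - (a-1)` of `a-1` edges, and `k-a` legs of one edge each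
(the pendant vertices `a, …, k-1` adjacent to the center `0`). -/
def broom (k a : ℕ) : SimpleGraph (Fin k) :=
  SimpleGraph.fromRel (fun i j =>
    ((i : ℕ) + 1 = (j : ℕ) ∧ (j : ℕ) < a) ∨ ((i : ℕ) = 0 ∧ a ≤ (j : ℕ)))

set_option linter.unusedSectionVars false

open Finset

variable {V : Type*} [Fintype V] [DecidableEq V]

/-- doubled edge count of the subgraph induced on `A` -/
def dsum (G : SimpleGraph V) [DecidableRel G.Adj] (A : Finset V) : ℕ :=
  ∑ u ∈ A, (G.neighborFinset u ∩ A).card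

lemma dsum_erase (G : SimpleGraph V) [DecidableRel G.Adj] (A : Finset V) (u : V) (hu : u ∈ A) :
    dsum G A = dsum G (A.erase u) + 2 * (G.neighborFinset u ∩ A).card := by
  classical
  set A' := A.erase u with hA'
  have hins : A = insert u A' := (Finset.insert_erase hu).symm
  have hunotmem : u ∉ A' := Finset.notMem_erase u A
  have hNu : G.neighborFinset u ∩ A = G.neighborFinset u ∩ A' := by
    rw [hins]
    ext y
    simp only [Finset.mem_inter, Finset.mem_insert]
    constructor
    · rintro ⟨hy, (rfl | hy')⟩
      · exact absurd hy (by simp)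
      · exact ⟨hy, hy'⟩
    · rintro ⟨hy, hy'⟩; exact ⟨hy, Or.inr hy'⟩
  have key : ∀ w ∈ A', (G.neighborFinset w ∩ A).card
      = (G.neighborFinset w ∩ A').card + (if u ∈ G.neighborFinset w then 1 else 0) := by
    intro w _
    by_cases h : u ∈ G.neighborFinset w
    · have : G.neighborFinset w ∩ A = insert u (G.neighborFinset w ∩ A') := by
        rw [hins]; ext y
        simp only [Finset.mem_inter, Finset.mem_insert]
        constructor
        · rintro ⟨hy, (rfl | hy')⟩
          · exact Or.inl rfl
          · exact Or.inr ⟨hy, hy'⟩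
        · rintro (rfl | ⟨hy, hy'⟩)
          · exact ⟨h, Or.inl rfl⟩
          · exact ⟨hy, Or.inr hy'⟩
      rw [this, Finset.card_insert_of_notMem (by simp [hunotmem]), if_pos h]
    · have : G.neighborFinset w ∩ A = G.neighborFinset w ∩ A' := by
        rw [hins]; ext y
        simp only [Finset.mem_inter, Finset.mem_insert]
        constructor
        · rintro ⟨hy, (rfl | hy')⟩
          · exact absurd hy h
          · exact ⟨hy, hy'⟩
        · rintro ⟨hy, hy'⟩; exact ⟨hy, Or.inr hy'⟩
      rw [this, if_neg h, Nat.add_zero]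
  have hsum : dsum G A = (G.neighborFinset u ∩ A).card + ∑ w ∈ A', (G.neighborFinset w ∩ A).card := by
    rw [dsum, hins, Finset.sum_insert hunotmem]
  rw [hsum, Finset.sum_congr rfl key, Finset.sum_add_distrib]
  have hfil : (∑ w ∈ A', if u ∈ G.neighborFinset w then 1 else 0)
      = (G.neighborFinset u ∩ A').card := by
    rw [← Finset.card_filter]
    congr 1
    ext w
    simp only [Finset.mem_filter, Finset.mem_inter, SimpleGraph.mem_neighborFinset]
    constructor
    · rintro ⟨hw, hadj⟩; exact ⟨hadj.symm, hw⟩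
    · rintro ⟨hadj, hw⟩; exact ⟨hw, hadj.symm⟩
  rw [hfil, hNu, dsum]
  ring

lemma exists_min_degree_subset (G : SimpleGraph V) [DecidableRel G.Adj] (c : ℕ) :
    ∀ (A : Finset V), 2 * c * A.card < dsum G A →
    ∃ W, W ⊆ A ∧ W.Nonempty ∧ (∀ u ∈ W, c + 1 ≤ (G.neighborFinset u ∩ W).card) ∧
      dsum G A ≤ dsum G W + 2 * c * (A.card - W.card) := by
  classical
  intro A
  induction A using Finset.strongInduction with
  | _ A ih =>
    intro hA
    by_cases hall : ∀ u ∈ A, c + 1 ≤ (G.neighborFinset u ∩ A).card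
    · refine ⟨A, Finset.Subset.refl A, ?_, hall, by simp⟩
      rcases Finset.eq_empty_or_nonempty A with rfl | hne
      · simp [dsum] at hA
      · exact hne
    · push_neg at hall
      obtain ⟨u, hu, hlow⟩ := hall
      have hlow' : (G.neighborFinset u ∩ A).card ≤ c := by omega
      have hsub : A.erase u ⊂ A := Finset.erase_ssubset hu
      have hcard : (A.erase u).card = A.card - 1 := Finset.card_erase_of_mem hu
      have hApos : 1 ≤ A.card := Finset.card_pos.mpr ⟨u, hu⟩
      have hkey := dsum_erase G A u hu
      obtain ⟨t, ht⟩ : ∃ t, A.card = t + 1 := ⟨A.card - 1, by omega⟩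
      have hmulA : 2 * c * A.card = 2 * c * (A.card - 1) + 2 * c := by
        rw [ht, Nat.add_sub_cancel]; ring
      have hA' : 2 * c * (A.erase u).card < dsum G (A.erase u) := by
        rw [hcard]; omega
      obtain ⟨W, hWsub, hWne, hWdeg, hWbound⟩ := ih (A.erase u) hsub hA'
      refine ⟨W, hWsub.trans (Finset.erase_subset u A), hWne, hWdeg, ?_⟩
      have hWA : W.card ≤ (A.erase u).card := Finset.card_le_card hWsub
      rw [hcard] at hWA hWbound
      have hmulW : 2 * c * (A.card - W.card) = 2 * c * (A.card - 1 - W.card) + 2 * c := by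
        have h2 : A.card - W.card = (A.card - 1 - W.card) + 1 := by omega
        rw [h2]; ring
      omega

section Sball
variable (G : SimpleGraph V) [DecidableRel G.Adj]

/-- the set of vertices reachable from `v` in at most `j` steps -/
def sball (v : V) : ℕ → Finset V
  | 0 => {v}
  | (j+1) => sball v j ∪ (sball v j).biUnion (fun y => G.neighborFinset y)

lemma sball_mono (v : V) : ∀ {i j : ℕ}, i ≤ j → sball G v i ⊆ sball G v j := by
  intro i j hij
  induction j with
  | zero => simp_all
  | succ j ihj =>
    rcases Nat.lt_or_ge i (j+1) with h | h
    · exact (ihj (by omega)).trans (by rw [sball]; exact Finset.subset_union_left)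
    · have : i = j + 1 := by omega
      subst this; exact Finset.Subset.refl _

lemma mem_sball_self (v : V) (j : ℕ) : v ∈ sball G v j :=
  sball_mono G v (Nat.zero_le j) (by simp [sball])

lemma mem_sball_of_walk (v : V) : ∀ {y : V} (w : G.Walk y v), y ∈ sball G v w.length := by
  intro y w
  induction w with
  | nil => simp [sball]
  | @cons y z _ h w ihw =>
    rw [SimpleGraph.Walk.length_cons, sball]
    refine Finset.mem_union_right _ (Finset.mem_biUnion.mpr ⟨z, ihw, ?_⟩)
    rw [SimpleGraph.mem_neighborFinset]
    exact h.symm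

lemma exists_mem_sball (v y : V) (h : G.Reachable v y) : ∃ j, y ∈ sball G v j := by
  obtain ⟨w⟩ := h.symm
  exact ⟨w.length, mem_sball_of_walk G v w⟩

lemma neighbor_mem_sball_one (v y : V) (h : G.Adj v y) : y ∈ sball G v 1 := by
  rw [sball]
  exact Finset.mem_union_right _ (Finset.mem_biUnion.mpr ⟨v, by simp [sball], by
    rw [SimpleGraph.mem_neighborFinset]; exact h⟩)

lemma chain_of_sball (v : V) (r : ℕ) : ∀ (z : V), z ∈ sball G v (r+1) → z ∉ sball G v r →
    ∃ x : ℕ → V, x 0 = v ∧ x (r+1) = z ∧ (∀ i ≤ r, G.Adj (x i) (x (i+1))) ∧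
      (∀ i ≤ r+1, x i ∈ sball G v i) ∧ (∀ i ≤ r, x (i+1) ∉ sball G v i) := by
  induction r with
  | zero =>
    intro z hz hz0
    have hadj : G.Adj v z := by
      rw [sball] at hz
      rcases Finset.mem_union.mp hz with h | h
      · exact absurd h hz0
      · obtain ⟨y, hy, hyz⟩ := Finset.mem_biUnion.mp h
        rw [sball, Finset.mem_singleton] at hy
        rw [hy] at hyz
        exact (SimpleGraph.mem_neighborFinset G v z).mp hyz
    refine ⟨fun i => if i = 0 then v else z, by simp, by simp, ?_, ?_, ?_⟩
    · intro i hi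
      interval_cases i
      simpa using hadj
    · intro i hi
      interval_cases i
      · simp [sball]
      · simpa using hz
    · intro i hi
      interval_cases i
      simpa using hz0
  | succ r ihr =>
    intro z hz hz1
    obtain ⟨y, hy, hyz⟩ : ∃ y ∈ sball G v (r+1), z ∈ G.neighborFinset y := by
      rw [sball] at hz
      rcases Finset.mem_union.mp hz with h | h
      · exact absurd h hz1
      · exact Finset.mem_biUnion.mp h
    have hyr : y ∉ sball G v r := by
      intro hyr
      exact hz1 (by
        rw [sball]
        exact Finset.mem_union_right _ (Finset.mem_biUnion.mpr ⟨y, hyr, hyz⟩))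
    obtain ⟨x, hx0, hxr, hxadj, hxmem, hxnot⟩ := ihr y hy hyr
    refine ⟨Function.update x (r+2) z, ?_, by simp, ?_, ?_, ?_⟩
    · rw [Function.update_of_ne (by omega) _ _]; exact hx0
    · intro i hi
      rcases Nat.lt_or_ge i (r+1) with h | h
      · rw [Function.update_of_ne (by omega) _ _, Function.update_of_ne (by omega) _ _]
        exact hxadj i (by omega)
      · have : i = r + 1 := by omega
        subst this
        rw [Function.update_of_ne (by omega) _ _, Function.update_self]
        rw [hxr]
        exact ((SimpleGraph.mem_neighborFinset G y z).mp hyz)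
    · intro i hi
      rcases Nat.lt_or_ge i (r+2) with h | h
      · rw [Function.update_of_ne (by omega) _ _]
        exact hxmem i (by omega)
      · have : i = r + 2 := by omega
        subst this
        rw [Function.update_self]
        exact hz
    · intro i hi
      rcases Nat.lt_or_ge i (r+1) with h | h
      · rw [Function.update_of_ne (by omega) _ _]
        exact hxnot i (by omega)
      · have : i = r + 1 := by omega
        subst this
        rw [Function.update_self]
        exact hz1

lemma extend_in_W (W : Finset V) (m : ℕ)
    (hW : ∀ u ∈ W, m + 1 ≤ (G.neighborFinset u ∩ W).card) :
    ∀ (q j : ℕ) (x : ℕ → V), j + q ≤ m → x j ∈ W →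
    (∀ i ≤ j, ∀ i' ≤ j, x i = x i' → i = i') →
    (∀ i < j, G.Adj (x i) (x (i+1))) →
    ∃ x' : ℕ → V, (∀ i ≤ j, x' i = x i) ∧
      (∀ i ≤ j + q, ∀ i' ≤ j + q, x' i = x' i' → i = i') ∧
      (∀ i < j + q, G.Adj (x' i) (x' (i+1))) ∧
      (∀ i, j ≤ i → i ≤ j + q → x' i ∈ W) := by
  intro q
  induction q with
  | zero =>
    intro j x hjq hxj hinj hadj
    exact ⟨x, fun i _ => rfl, by simpa using hinj, by simpa using hadj, by
      intro i h1 h2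
      have : i = j := by omega
      subst this; exact hxj⟩
  | succ q ihq =>
    intro j x hjq hxj hinj hadj
    obtain ⟨x', hagree, hinj', hadj', hmem'⟩ := ihq j x (by omega) hxj hinj hadj
    set e := j + q with he
    have hxe : x' e ∈ W := hmem' e (by omega) (by omega)
    have hcard : ((G.neighborFinset (x' e) ∩ W) \ ((Finset.range (e+1)).image x')).Nonempty := by
      rw [← Finset.card_pos]
      have h1 : m + 1 ≤ (G.neighborFinset (x' e) ∩ W).card := hW _ hxe
      have h2 : ((Finset.range (e+1)).image x').card ≤ e + 1 :=
        (Finset.card_image_le).trans (by simp)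
      have h4 : (G.neighborFinset (x' e) ∩ W).card - ((Finset.range (e+1)).image x').card
          ≤ ((G.neighborFinset (x' e) ∩ W) \ ((Finset.range (e+1)).image x')).card :=
        Finset.le_card_sdiff _ _
      omega
    obtain ⟨y, hy⟩ := hcard
    rw [Finset.mem_sdiff, Finset.mem_inter, SimpleGraph.mem_neighborFinset] at hy
    obtain ⟨⟨hyadj, hyW⟩, hynot⟩ := hy
    refine ⟨Function.update x' (e+1) y, ?_, ?_, ?_, ?_⟩
    · intro i hi
      rw [Function.update_of_ne (by omega) _ _]
      exact hagree i hi
    · intro i hi i' hi' heq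
      have key : ∀ i'' ≤ e, Function.update x' (e+1) y i'' = x' i'' := by
        intro i'' h
        exact Function.update_of_ne (by omega) _ _
      rcases Nat.lt_or_ge i (e+1) with h | h <;> rcases Nat.lt_or_ge i' (e+1) with h' | h'
      · rw [key i (by omega), key i' (by omega)] at heq
        exact hinj' i (by omega) i' (by omega) heq
      · have : i' = e + 1 := by omega
        subst this
        rw [key i (by omega), Function.update_self] at heq
        exact absurd (Finset.mem_image.mpr ⟨i, Finset.mem_range.mpr (by omega), heq⟩) hynot
      · have : i = e + 1 := by omega
        subst this
        rw [key i' (by omega), Function.update_self] at heq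
        exact absurd (Finset.mem_image.mpr ⟨i', Finset.mem_range.mpr (by omega), heq.symm⟩) hynot
      · omega
    · intro i hi
      rcases Nat.lt_or_ge i e with h | h
      · rw [Function.update_of_ne (by omega) _ _, Function.update_of_ne (by omega) _ _]
        exact hadj' i (by omega)
      · have : i = e := by omega
        subst this
        rw [Function.update_of_ne (by omega) _ _, Function.update_self]
        exact hyadj
    · intro i h1 h2
      rcases Nat.lt_or_ge i (e+1) with h | h
      · rw [Function.update_of_ne (by omega) _ _]
        exact hmem' i h1 (by omega)
      · have : i = e + 1 := by omega
        subst this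
        rw [Function.update_self]
        exact hyW

end Sball

lemma containsCopy_broom_of_path {k a : ℕ} (ha : 2 ≤ a) (hak : 3 * a ≤ k)
    (G : SimpleGraph V) [DecidableRel G.Adj]
    (x : ℕ → V)
    (hinj : ∀ i ≤ a - 1, ∀ j ≤ a - 1, x i = x j → i = j)
    (hadj : ∀ i < a - 1, G.Adj (x i) (x (i+1)))
    (T : Finset V) (hTcard : T.card = k - a)
    (hTadj : ∀ y ∈ T, G.Adj (x 0) y)
    (hTdisj : ∀ i ≤ a - 1, x i ∉ T) :
    ContainsCopy (broom k a) G := by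
  classical
  have hk6 : 6 ≤ k := by omega
  set φ : Fin (k - a) → {y // y ∈ T} := fun i => T.equivFin.symm (Fin.cast hTcard.symm i) with hφ
  have hφinj : Function.Injective φ := by
    intro i j hij
    have h2 := T.equivFin.symm.injective hij
    have h3 : (i : ℕ) = (j : ℕ) := by simpa using congrArg Fin.val h2
    exact Fin.ext h3
  set f : Fin k → V := fun i =>
    if h : (i : ℕ) < a then x i else (φ ⟨(i : ℕ) - a, by omega⟩ : V) with hf
  have hfval_lt : ∀ (i : Fin k), (i : ℕ) < a → f i = x i := by
    intro i h; simp only [hf, dif_pos h]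
  have hfval_ge : ∀ (i : Fin k) (h : a ≤ (i : ℕ)), f i = (φ ⟨(i : ℕ) - a, by omega⟩ : V) := by
    intro i h; simp only [hf, dif_neg (by omega : ¬ (i : ℕ) < a)]
  have hfT : ∀ (i : Fin k), a ≤ (i : ℕ) → f i ∈ T := by
    intro i h
    rw [hfval_ge i h]
    exact (φ ⟨(i : ℕ) - a, by omega⟩).2
  have hfinj : Function.Injective f := by
    intro i j hij
    by_cases hi : (i : ℕ) < a <;> by_cases hj : (j : ℕ) < a
    · rw [hfval_lt i hi, hfval_lt j hj] at hij
      exact Fin.ext (hinj _ (by omega) _ (by omega) hij)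
    · rw [hfval_lt i hi] at hij
      exact absurd (hij ▸ hfT j (by omega)) (hTdisj _ (by omega))
    · rw [hfval_lt j hj] at hij
      exact absurd (hij ▸ hfT i (by omega)) (hTdisj _ (by omega))
    · rw [hfval_ge i (by omega), hfval_ge j (by omega)] at hij
      have := hφinj (Subtype.ext hij)
      have h2 : (i : ℕ) - a = (j : ℕ) - a := congrArg Fin.val this
      exact Fin.ext (by omega)
  refine ⟨⟨f, hfinj⟩, ?_⟩
  intro i j hijadj
  rw [broom, SimpleGraph.fromRel_adj] at hijadj
  obtain ⟨hne, hrel⟩ := hijadj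
  have main : ∀ (i j : Fin k), ((i : ℕ) + 1 = (j : ℕ) ∧ (j : ℕ) < a) ∨ ((i : ℕ) = 0 ∧ a ≤ (j : ℕ)) →
      G.Adj (f i) (f j) := by
    intro i j hr
    rcases hr with ⟨h1, h2⟩ | ⟨h1, h2⟩
    · have hi : (i : ℕ) < a := by omega
      rw [hfval_lt i hi, hfval_lt j h2, ← h1]
      exact hadj _ (by omega)
    · have h0 : (i : ℕ) < a := by omega
      rw [hfval_lt i h0, h1]
      have := hTadj _ (hfT j h2)
      exact this
  rcases hrel with hr | hr
  · exact main i j hr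
  · exact (main j i hr).symm

lemma exists_path_from (G : SimpleGraph V) [DecidableRel G.Adj] (hconn : G.Connected)
    (W : Finset V) (hWne : W.Nonempty) (m a : ℕ) (ha : 1 ≤ a) (hma : a ≤ m)
    (hWdeg : ∀ u ∈ W, m + 1 ≤ (G.neighborFinset u ∩ W).card) (v : V) :
    ∃ x : ℕ → V, x 0 = v ∧ (∀ i ≤ a - 1, ∀ j ≤ a - 1, x i = x j → i = j) ∧
      (∀ i < a - 1, G.Adj (x i) (x (i+1))) := by
  classical
  have hex : ∃ j, ∃ w ∈ W, w ∈ sball G v j := by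
    obtain ⟨w, hw⟩ := hWne
    obtain ⟨j, hj⟩ := exists_mem_sball G v w (hconn.preconnected v w)
    exact ⟨j, w, hw, hj⟩
  obtain ⟨w, hwW, hwball⟩ := Nat.find_spec hex
  set ℓ := Nat.find hex with hℓ
  rcases Nat.eq_zero_or_pos ℓ with hℓ0 | hℓpos
  · -- v ∈ W
    rw [hℓ0] at hwball
    have hvW : v ∈ W := by
      rw [sball, Finset.mem_singleton] at hwball
      rwa [hwball] at hwW
    obtain ⟨x', hagree, hinj, hadj, _⟩ := extend_in_W G W m hWdeg (a-1) 0 (fun _ => v)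
      (by omega) hvW (by intro i hi i' hi'; omega) (by intro i hi; omega)
    exact ⟨x', by rw [hagree 0 (by omega)], by simpa using hinj, by simpa using hadj⟩
  · have hwnot : w ∉ sball G v (ℓ - 1) := by
      intro hcon
      exact Nat.find_min hex (show ℓ - 1 < ℓ by omega) ⟨w, hwW, hcon⟩
    obtain ⟨x, hx0, hxr, hxadj, hxmem, hxnot⟩ := chain_of_sball G v (ℓ - 1) w
      (by rwa [Nat.sub_add_cancel hℓpos]) hwnot
    have hl1 : ℓ - 1 + 1 = ℓ := Nat.sub_add_cancel hℓpos
    rw [hl1] at hxr hxmem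
    have hadj' : ∀ i < ℓ, G.Adj (x i) (x (i+1)) := fun i hi => hxadj i (by omega)
    have hnot' : ∀ i, 1 ≤ i → i ≤ ℓ → x i ∉ sball G v (i-1) := by
      intro i h1 h2
      have := hxnot (i-1) (by omega)
      rwa [Nat.sub_add_cancel h1] at this
    have hinjc : ∀ i ≤ ℓ, ∀ j ≤ ℓ, x i = x j → i = j := by
      have key : ∀ i j, i < j → j ≤ ℓ → x i ≠ x j := by
        intro i j hij hj hcon
        have h1 : x i ∈ sball G v i := hxmem i (by omega)
        have h2 : x j ∉ sball G v (j - 1) := hnot' j (by omega) hj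
        exact h2 (hcon ▸ sball_mono G v (by omega : i ≤ j - 1) h1)
      intro i hi j hj hcon
      rcases Nat.lt_trichotomy i j with h | h | h
      · exact absurd hcon (key i j h hj)
      · exact h
      · exact absurd hcon.symm (key j i h hi)
    rcases Nat.lt_or_ge ℓ (a-1) with hcase | hcase
    · -- ℓ ≤ a - 2 : extend inside W
      have hxw : x ℓ ∈ W := by rw [hxr]; exact hwW
      obtain ⟨x', hagree, hinj, hadj, _⟩ := extend_in_W G W m hWdeg (a-1-ℓ) ℓ x
        (by omega) hxw (fun i hi i' hi' => hinjc i hi i' hi') (fun i hi => hadj' i hi)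
      have hsum : ℓ + (a-1-ℓ) = a - 1 := by omega
      rw [hsum] at hinj hadj
      exact ⟨x', by rw [hagree 0 (by omega)]; exact hx0, hinj, hadj⟩
    · -- ℓ ≥ a - 1: truncate the chain
      refine ⟨x, hx0, ?_, ?_⟩
      · intro i hi j hj hcon
        exact hinjc i (by omega) j (by omega) hcon
      · intro i hi
        exact hadj' i (by omega)

theorem edge_bound_of_broomFree (k a n : ℕ) (ha : 2 ≤ a) (hak : 3 * a ≤ k) (hn : k ^ k ≤ n)
    (G : SimpleGraph (Fin n)) (hc : G.Connected) (hfree : ¬ ContainsCopy (broom k a) G) :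
    G.edgeSet.ncard ≤ (k - a) * n / 2 := by
  classical
  by_contra hE
  push_neg at hE
  set d := k - a with hd
  set m := d / 2 with hmdef
  have hk6 : 6 ≤ k := by omega
  have hd2a : 2 * a ≤ d := by omega
  have hma : a ≤ m := by omega
  have hcnt : G.edgeSet.ncard = G.edgeFinset.card := by
    rw [Set.ncard_eq_toFinset_card']
    congr 1
  have hhand : ∑ v, G.degree v = 2 * G.edgeFinset.card := G.sum_degrees_eq_twice_card_edges
  have hdsum_univ : dsum G Finset.univ = ∑ v, G.degree v := by
    unfold dsum SimpleGraph.degree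
    simp [Finset.inter_univ]
  have hncard : (Finset.univ : Finset (Fin n)).card = n := by simp
  rw [hcnt] at hE
  have h2E : d * n + 1 ≤ dsum G Finset.univ := by
    rw [hdsum_univ, hhand]
    omega
  obtain ⟨W, hWsub, hWne, hWdeg, hWbound⟩ := exists_min_degree_subset G m Finset.univ (by
    rw [hncard]
    have h1 : 2 * m * n ≤ d * n := Nat.mul_le_mul_right n (by omega)
    omega)
  rw [hncard] at hWbound
  -- E1 : max degree at most k - 2
  have hE1 : ∀ v : Fin n, G.degree v ≤ k - 2 := by
    intro v
    by_contra hdeg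
    push_neg at hdeg
    obtain ⟨x, hx0, hinj, hadj⟩ := exists_path_from G hc W hWne m a (by omega) hma hWdeg v
    set P := (Finset.range a).image x with hP
    have hNP : (G.neighborFinset v ∩ P).card ≤ a - 1 := by
      have hsub : G.neighborFinset v ∩ P ⊆ P.erase v := by
        intro y hy
        rw [Finset.mem_inter] at hy
        refine Finset.mem_erase.mpr ⟨?_, hy.2⟩
        intro hcon
        have := (SimpleGraph.mem_neighborFinset G v y).mp hy.1
        rw [hcon] at this
        exact G.irrefl this
      have hvP : v ∈ P := by
        rw [hP]
        exact Finset.mem_image.mpr ⟨0, Finset.mem_range.mpr (by omega), hx0⟩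
      have := Finset.card_le_card hsub
      rw [Finset.card_erase_of_mem hvP] at this
      have hcard : P.card ≤ a := (Finset.card_image_le).trans (by simp)
      omega
    have hsd : k - a ≤ (G.neighborFinset v \ P).card := by
      have h1 : (G.neighborFinset v \ P).card
          = G.degree v - (G.neighborFinset v ∩ P).card := by
        rw [← Finset.sdiff_inter_self_left]
        rw [Finset.card_sdiff_of_subset (Finset.inter_subset_left)]
        rfl
      omega
    obtain ⟨T, hTsub, hTcard⟩ := Finset.exists_subset_card_eq hsd
    refine hfree (containsCopy_broom_of_path ha hak G x hinj hadj T hTcard ?_ ?_)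
    · intro y hy
      have := hTsub hy
      rw [Finset.mem_sdiff] at this
      rw [← hx0] at *
      exact (SimpleGraph.mem_neighborFinset G (x 0) y).mp this.1
    · intro i hi hcon
      have := hTsub hcon
      rw [Finset.mem_sdiff] at this
      exact this.2 (Finset.mem_image.mpr ⟨i, Finset.mem_range.mpr (by omega), rfl⟩)
  by_cases hWd : ∀ u ∈ W, G.degree u ≤ d
  · -- Case I : all degrees in W small; counting contradiction
    have h1 : dsum G W ≤ d * W.card := by
      unfold dsum
      calc ∑ u ∈ W, (G.neighborFinset u ∩ W).card
          ≤ ∑ u ∈ W, d := by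
            refine Finset.sum_le_sum ?_
            intro u hu
            exact le_trans (Finset.card_le_card Finset.inter_subset_left) (hWd u hu)
        _ = d * W.card := by rw [Finset.sum_const, smul_eq_mul, Nat.mul_comm]
    have h5 : W.card ≤ n := by
      have := Finset.card_le_card hWsub
      rwa [hncard] at this
    have h6 : 2 * m * (n - W.card) ≤ d * (n - W.card) := Nat.mul_le_mul_right _ (by omega)
    have h7 : d * W.card + d * (n - W.card) = d * n := by
      rw [← Nat.mul_add, Nat.add_sub_cancel' h5]
    omega
  · -- Case II : some vertex of W has degree ≥ d + 1
    push_neg at hWd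
    obtain ⟨u₀, hu₀W, hu₀d⟩ := hWd
    have hcover : ∀ z : Fin n, z ∈ sball G u₀ (a - 2) := by
      intro z
      by_contra hz
      have hexz : ∃ j, z ∈ sball G u₀ j := exists_mem_sball G u₀ z (hc.preconnected u₀ z)
      have hzr : z ∈ sball G u₀ (Nat.find hexz) := Nat.find_spec hexz
      set r := Nat.find hexz with hr
      have hmin : ∀ i, i < r → z ∉ sball G u₀ i := fun i h => Nat.find_min hexz h
      have hra : a - 1 ≤ r := by
        by_contra hcon
        push_neg at hcon
        exact hz (sball_mono G u₀ (by omega : r ≤ a - 2) hzr)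
      have hr1 : 1 ≤ r := by omega
      obtain ⟨x, hx0, hxr, hxadj, hxmem, hxnot⟩ := chain_of_sball G u₀ (r - 1) z
        (by rwa [Nat.sub_add_cancel hr1]) (hmin (r-1) (by omega))
      have hnot' : ∀ i, 1 ≤ i → i ≤ r → x i ∉ sball G u₀ (i-1) := by
        intro i h1 h2
        have := hxnot (i-1) (by omega)
        rwa [Nat.sub_add_cancel h1] at this
      have hinjc : ∀ i ≤ a - 1, ∀ j ≤ a - 1, x i = x j → i = j := by
        have key : ∀ i j, i < j → j ≤ a - 1 → x i ≠ x j := by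
          intro i j hij hj hcon
          have h1 : x i ∈ sball G u₀ i := hxmem i (by omega)
          have h2 : x j ∉ sball G u₀ (j - 1) := hnot' j (by omega) (by omega)
          exact h2 (hcon ▸ sball_mono G u₀ (by omega : i ≤ j - 1) h1)
        intro i hi j hj hcon
        rcases Nat.lt_trichotomy i j with h | h | h
        · exact absurd hcon (key i j h hj)
        · exact h
        · exact absurd hcon.symm (key j i h hi)
      have hadj' : ∀ i < a - 1, G.Adj (x i) (x (i+1)) := fun i hi => hxadj i (by omega)
      set P := (Finset.range a).image x with hP
      have hNP : (G.neighborFinset u₀ ∩ P).card ≤ 1 := by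
        have hsub : G.neighborFinset u₀ ∩ P ⊆ {x 1} := by
          intro y hy
          rw [Finset.mem_inter, hP, Finset.mem_image] at hy
          obtain ⟨hyN, i, hi, hyx⟩ := hy
          rw [Finset.mem_range] at hi
          rw [Finset.mem_singleton]
          rcases Nat.lt_trichotomy i 1 with h | h | h
          · exfalso
            have : i = 0 := by omega
            rw [this, hx0] at hyx
            rw [← hyx] at hyN
            exact G.irrefl ((SimpleGraph.mem_neighborFinset G u₀ u₀).mp hyN)
          · rw [← h]; exact hyx.symm ▸ rfl
          · exfalso
            have h2 : x i ∉ sball G u₀ (i-1) := hnot' i (by omega) (by omega)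
            have h3 : y ∈ sball G u₀ 1 :=
              neighbor_mem_sball_one G u₀ y ((SimpleGraph.mem_neighborFinset G u₀ y).mp hyN)
            rw [hyx] at h2
            exact h2 (sball_mono G u₀ (by omega : 1 ≤ i - 1) h3)
        exact (Finset.card_le_card hsub).trans (by simp)
      have hsd : k - a ≤ (G.neighborFinset u₀ \ P).card := by
        have h1 : (G.neighborFinset u₀ \ P).card
            = G.degree u₀ - (G.neighborFinset u₀ ∩ P).card := by
          rw [← Finset.sdiff_inter_self_left]
          rw [Finset.card_sdiff_of_subset (Finset.inter_subset_left)]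
          rfl
        omega
      obtain ⟨T, hTsub, hTcard⟩ := Finset.exists_subset_card_eq hsd
      refine hfree (containsCopy_broom_of_path ha hak G x hinjc hadj' T hTcard ?_ ?_)
      · intro y hy
        have := hTsub hy
        rw [Finset.mem_sdiff] at this
        rw [← hx0] at *
        exact (SimpleGraph.mem_neighborFinset G (x 0) y).mp this.1
      · intro i hi hcon
        have := hTsub hcon
        rw [Finset.mem_sdiff] at this
        exact this.2 (Finset.mem_image.mpr ⟨i, Finset.mem_range.mpr (by omega), rfl⟩)
    -- counting : the graph is small
    have hball : ∀ j, (sball G u₀ j).card ≤ (k-1)^j := by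
      intro j
      induction j with
      | zero => simp [sball]
      | succ j ihj =>
        rw [sball]
        have h1 := Finset.card_union_le (sball G u₀ j) ((sball G u₀ j).biUnion (fun y => G.neighborFinset y))
        have h2 : ((sball G u₀ j).biUnion (fun y => G.neighborFinset y)).card
            ≤ (sball G u₀ j).card * (k - 2) := by
          refine (Finset.card_biUnion_le).trans ?_
          calc ∑ y ∈ sball G u₀ j, (G.neighborFinset y).card
              ≤ ∑ y ∈ sball G u₀ j, (k-2) :=
                Finset.sum_le_sum (fun y _ => hE1 y)
            _ = (sball G u₀ j).card * (k-2) := by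
                rw [Finset.sum_const, smul_eq_mul]
        have h3 : (sball G u₀ j).card + (sball G u₀ j).card * (k-2) ≤ (k-1)^j * (k-1) := by
          have : (sball G u₀ j).card + (sball G u₀ j).card * (k-2)
              = (sball G u₀ j).card * (k-1) := by
            have hk1 : k - 1 = (k - 2) + 1 := by omega
            rw [hk1, Nat.mul_add, Nat.mul_one]; ring
          rw [this]
          exact Nat.mul_le_mul_right _ ihj
        rw [← pow_succ] at h3
        omega
    have hcovc : n ≤ (k-1)^(a-2) := by
      have hsub : (Finset.univ : Finset (Fin n)) ⊆ sball G u₀ (a-2) := fun z _ => hcover z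
      have := Finset.card_le_card hsub
      rw [hncard] at this
      exact this.trans (hball (a-2))
    have hfin : (k-1)^(a-2) < k^k := by
      have h1 : (k-1)^(a-2) ≤ (k-1)^k := Nat.pow_le_pow_right (by omega) (by omega)
      have h2 : (k-1)^k < k^k := Nat.pow_lt_pow_left (by omega) (by omega)
      omega
    omega

section Lower

lemma not_contains_broom_of_max_degree {k a : ℕ} (ha : 2 ≤ a) (hak : 3 * a ≤ k)
    (G : SimpleGraph V) [DecidableRel G.Adj]
    (hdeg : ∀ v, G.degree v ≤ k - a) :
    ¬ ContainsCopy (broom k a) G := by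
  rintro ⟨f, hf⟩
  have hk6 : 6 ≤ k := by omega
  set d := k - a with hd
  have hψbd : ∀ j : Fin (d+1), (if (j:ℕ) = 0 then 1 else a + (j:ℕ) - 1) < k := by
    intro j
    have := j.isLt
    split <;> omega
  set ψ : Fin (d+1) → Fin k := fun j => ⟨if (j:ℕ) = 0 then 1 else a + (j:ℕ) - 1, hψbd j⟩ with hψ
  set z0 : Fin k := ⟨0, by omega⟩ with hz0
  have hadj0 : ∀ j, (broom k a).Adj z0 (ψ j) := by
    intro j
    rw [broom, SimpleGraph.fromRel_adj]
    constructor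
    · intro hcon
      have := congrArg Fin.val hcon
      simp only [hz0, hψ] at this
      split at this <;> omega
    · by_cases hj : (j : ℕ) = 0
      · refine Or.inl (Or.inl ⟨?_, ?_⟩)
        · show (z0 : ℕ) + 1 = (ψ j : ℕ)
          simp [hz0, hψ, hj]
          intro h; exact absurd (Fin.ext (by simp [hj])) h
        · show (ψ j : ℕ) < a
          simp only [hψ, hj, if_pos]
          omega
      · refine Or.inl (Or.inr ⟨?_, ?_⟩)
        · show (z0 : ℕ) = 0
          simp [hz0]
        · show a ≤ (ψ j : ℕ)
          simp only [hψ, hj, if_neg, if_false]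
          have := j.isLt
          omega
  have hinjψ : Function.Injective ψ := by
    intro i j h
    have := congrArg Fin.val h
    simp only [hψ] at this
    have hi := i.isLt
    have hj := j.isLt
    refine Fin.ext ?_
    split at this <;> split at this <;> omega
  have hmaps : ∀ j : Fin (d+1), f (ψ j) ∈ G.neighborFinset (f z0) := by
    intro j
    rw [SimpleGraph.mem_neighborFinset]
    exact hf (hadj0 j)
  have hcard : (Finset.univ : Finset (Fin (d+1))).card ≤ (G.neighborFinset (f z0)).card :=
    Finset.card_le_card_of_injOn (fun j => f (ψ j))
      (fun j _ => hmaps j) (by intro i _ j _ h; exact hinjψ (f.injective h))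
  rw [Finset.card_univ, Fintype.card_fin, SimpleGraph.card_neighborFinset_eq_degree] at hcard
  have := hdeg (f z0)
  omega

variable (n : ℕ) [NeZero n]

def circD (D : Finset (ZMod n)) (hsym : ∀ z ∈ D, -z ∈ D) (h0 : (0:ZMod n) ∉ D) :
    SimpleGraph (ZMod n) where
  Adj x y := y - x ∈ D
  symm := by
    constructor
    intro x y h
    have := hsym _ h
    rwa [neg_sub] at this
  loopless := by
    constructor
    intro x h
    rw [sub_self] at h
    exact h0 h

instance circD_decAdj (D : Finset (ZMod n)) (hsym : ∀ z ∈ D, -z ∈ D) (h0 : (0:ZMod n) ∉ D) :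
    DecidableRel (circD n D hsym h0).Adj := fun _ _ => by
  unfold circD
  infer_instance

lemma circD_adj (D : Finset (ZMod n)) (hsym : ∀ z ∈ D, -z ∈ D) (h0 : (0:ZMod n) ∉ D)
    (x y : ZMod n) : (circD n D hsym h0).Adj x y ↔ y - x ∈ D := Iff.rfl

lemma circD_degree (D : Finset (ZMod n)) (hsym : ∀ z ∈ D, -z ∈ D) (h0 : (0:ZMod n) ∉ D)
    (x : ZMod n) : (circD n D hsym h0).degree x = D.card := by
  rw [← SimpleGraph.card_neighborFinset_eq_degree]
  have himg : (circD n D hsym h0).neighborFinset x = D.image (fun z => x + z) := by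
    ext y
    rw [SimpleGraph.mem_neighborFinset, circD_adj, Finset.mem_image]
    constructor
    · intro h; exact ⟨y - x, h, by ring⟩
    · rintro ⟨z, hz, rfl⟩
      simpa using hz
  rw [himg, Finset.card_image_of_injective _ (add_right_injective x)]

lemma connected_of_adj_succ (G : SimpleGraph (ZMod n)) (h : ∀ x, G.Adj x (x+1)) :
    G.Connected := by
  rw [SimpleGraph.connected_iff]
  refine ⟨?_, ⟨0⟩⟩
  have key : ∀ c : ℕ, G.Reachable 0 (c : ZMod n) := by
    intro c
    induction c with
    | zero => rw [Nat.cast_zero]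
    | succ c ih =>
      refine ih.trans ?_
      have := (h (c : ZMod n)).reachable
      rwa [Nat.cast_succ]
  intro x y
  have hx := key x.val
  have hy := key y.val
  rw [ZMod.natCast_rightInverse x] at hx
  rw [ZMod.natCast_rightInverse y] at hy
  exact hx.symm.trans hy

end Lower

section LowerMain

def matchG (n s : ℕ) (hs1 : 1 ≤ s) (hs2 : 2*s < n) : SimpleGraph (ZMod n) where
  Adj x y := ∃ c : ℕ, 1 ≤ c ∧ c ≤ s ∧
    ((x = (c : ZMod n) ∧ y = ((c + s : ℕ) : ZMod n)) ∨
     (y = (c : ZMod n) ∧ x = ((c + s : ℕ) : ZMod n)))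
  symm := by
    constructor
    rintro x y ⟨c, hc1, hc2, h⟩
    exact ⟨c, hc1, hc2, h.symm⟩
  loopless := by
    constructor
    rintro x ⟨c, hc1, hc2, (⟨rfl, hcon⟩ | ⟨hcon1, hcon2⟩)⟩
    · have := congrArg ZMod.val hcon
      rw [ZMod.val_cast_of_lt (by omega), ZMod.val_cast_of_lt (by omega)] at this
      omega
    · rw [hcon1] at hcon2
      have := congrArg ZMod.val hcon2
      rw [ZMod.val_cast_of_lt (by omega), ZMod.val_cast_of_lt (by omega)] at this
      omega

lemma matchG_adj (n s : ℕ) (hs1 : 1 ≤ s) (hs2 : 2*s < n) (x y : ZMod n) :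
    (matchG n s hs1 hs2).Adj x y ↔ ∃ c : ℕ, 1 ≤ c ∧ c ≤ s ∧
    ((x = (c : ZMod n) ∧ y = ((c + s : ℕ) : ZMod n)) ∨
     (y = (c : ZMod n) ∧ x = ((c + s : ℕ) : ZMod n))) := Iff.rfl

lemma matchG_determined (n s : ℕ) (hs1 : 1 ≤ s) (hs2 : 2*s < n) (x y : ZMod n)
    (h : (matchG n s hs1 hs2).Adj x y) :
    (1 ≤ x.val ∧ x.val ≤ s ∧ y = ((x.val + s : ℕ) : ZMod n)) ∨
    (s + 1 ≤ x.val ∧ x.val ≤ 2*s ∧ y = ((x.val - s : ℕ) : ZMod n)) := by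
  obtain ⟨c, hc1, hc2, hcase⟩ := h
  rcases hcase with ⟨rfl, rfl⟩ | ⟨rfl, rfl⟩
  · left
    rw [ZMod.val_cast_of_lt (by omega)]
    exact ⟨hc1, hc2, rfl⟩
  · right
    rw [ZMod.val_cast_of_lt (by omega)]
    refine ⟨by omega, by omega, ?_⟩
    congr 1
    omega

theorem exists_extremal_zmod (k a n : ℕ) (ha : 2 ≤ a) (hak : 3 * a ≤ k) (hn : k ^ k ≤ n)
    [NeZero n] :
    ∃ G : SimpleGraph (ZMod n), G.Connected ∧ ¬ ContainsCopy (broom k a) G ∧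
      G.edgeSet.ncard = (k - a) * n / 2 := by
  classical
  set d := k - a with hd
  set m := d / 2 with hm
  have hk6 : 6 ≤ k := by omega
  have hm1 : 2 ≤ m := by omega
  have hnbig : 2*k + 6 ≤ n := by
    have h1 : k * k ≤ k ^ k := by
      calc k * k = k ^ 2 := (sq k).symm
        _ ≤ k ^ k := Nat.pow_le_pow_right (by omega) (by omega)
    have h2 : 6 * k ≤ k * k := Nat.mul_le_mul_right k (by omega)
    omega
  have h2m3 : 2*m + 3 ≤ n := by omega
  -- the basic difference set
  set Iset : Finset (ZMod n) := (Finset.Icc 1 m).image (fun i : ℕ => (i : ZMod n)) with hI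
  set Dset : Finset (ZMod n) := Iset ∪ Iset.image (fun z => -z) with hD
  have hInotzero : ∀ z ∈ Iset, z ≠ 0 := by
    intro z hz
    rw [hI, Finset.mem_image] at hz
    obtain ⟨i, hi, rfl⟩ := hz
    rw [Finset.mem_Icc] at hi
    intro hcon
    rw [ZMod.natCast_eq_zero_iff] at hcon
    have := Nat.le_of_dvd (by omega) hcon
    omega
  have hnegdisj : ∀ z ∈ Iset, -z ∉ Iset := by
    intro z hz hcon
    rw [hI, Finset.mem_image] at hz hcon
    obtain ⟨i, hi, rfl⟩ := hz
    obtain ⟨j, hj, hji⟩ := hcon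
    rw [Finset.mem_Icc] at hi hj
    have hzero : ((j + i : ℕ) : ZMod n) = 0 := by
      push_cast
      rw [hji]
      ring
    rw [ZMod.natCast_eq_zero_iff] at hzero
    have := Nat.le_of_dvd (by omega) hzero
    omega
  have hDsym : ∀ z ∈ Dset, -z ∈ Dset := by
    intro z hz
    rw [hD, Finset.mem_union] at hz ⊢
    rcases hz with hz | hz
    · right; exact Finset.mem_image.mpr ⟨z, hz, rfl⟩
    · left
      obtain ⟨w, hw, rfl⟩ := Finset.mem_image.mp hz
      rwa [neg_neg]
  have hD0 : (0 : ZMod n) ∉ Dset := by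
    rw [hD, Finset.mem_union]
    rintro (h | h)
    · exact hInotzero 0 h rfl
    · obtain ⟨w, hw, hww⟩ := Finset.mem_image.mp h
      have : w = 0 := by rwa [neg_eq_zero] at hww
      exact hInotzero w hw (this ▸ rfl)
  have hIcard : Iset.card = m := by
    rw [hI, Finset.card_image_of_injOn, Nat.card_Icc]
    · omega
    · intro i hi j hj hij
      rw [Finset.coe_Icc, Set.mem_Icc] at hi hj
      have := congrArg ZMod.val hij
      rwa [ZMod.val_cast_of_lt (by omega), ZMod.val_cast_of_lt (by omega)] at this
  have hDdisj : Disjoint Iset (Iset.image (fun z => -z)) := by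
    rw [Finset.disjoint_left]
    intro z hz hcon
    obtain ⟨w, hw, hww⟩ := Finset.mem_image.mp hcon
    have : -z ∈ Iset := by
      rw [← hww, neg_neg]; exact hw
    exact hnegdisj z hz this
  have hDcard : Dset.card = 2 * m := by
    rw [hD, Finset.card_union_of_disjoint hDdisj,
      Finset.card_image_of_injective _ neg_injective, hIcard]
    ring
  have h1D : (1 : ZMod n) ∈ Dset := by
    rw [hD, Finset.mem_union]
    left
    rw [hI, Finset.mem_image]
    exact ⟨1, Finset.mem_Icc.mpr ⟨le_refl 1, by omega⟩, Nat.cast_one⟩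
  have hnotD : ∀ t : ℕ, m + 1 ≤ t → t + m < n → ((t : ℕ) : ZMod n) ∉ Dset := by
    intro t ht1 ht2 hcon
    rw [hD, Finset.mem_union] at hcon
    rcases hcon with h | h
    · rw [hI, Finset.mem_image] at h
      obtain ⟨i, hi, hit⟩ := h
      rw [Finset.mem_Icc] at hi
      have := congrArg ZMod.val hit
      rw [ZMod.val_cast_of_lt (by omega), ZMod.val_cast_of_lt (by omega)] at this
      omega
    · obtain ⟨z, hz, hzt⟩ := Finset.mem_image.mp h
      rw [hI, Finset.mem_image] at hz
      obtain ⟨i, hi, rfl⟩ := hz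
      rw [Finset.mem_Icc] at hi
      have hzero : ((t + i : ℕ) : ZMod n) = 0 := by
        push_cast
        rw [← hzt]
        ring
      rw [ZMod.natCast_eq_zero_iff] at hzero
      have := Nat.le_of_dvd (by omega) hzero
      omega
  rcases Nat.even_or_odd d with hde | hdo
  · -- Case A : d even
    have he2 : d = 2 * m := by
      have := Nat.even_iff.mp hde
      omega
    refine ⟨circD n Dset hDsym hD0, ?_, ?_, ?_⟩
    · apply connected_of_adj_succ
      intro x
      show (x + 1) - x ∈ Dset
      rw [add_sub_cancel_left]
      exact h1D
    · apply not_contains_broom_of_max_degree ha hak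
      intro v
      rw [circD_degree, hDcard]
      omega
    · have hhand := (circD n Dset hDsym hD0).sum_degrees_eq_twice_card_edges
      have hdeg : ∀ x, (circD n Dset hDsym hD0).degree x = 2*m := fun x => by
        rw [circD_degree, hDcard]
      rw [Finset.sum_congr rfl (fun x _ => hdeg x), Finset.sum_const, smul_eq_mul,
        Finset.card_univ, ZMod.card] at hhand
      have hcnt : (circD n Dset hDsym hD0).edgeSet.ncard
          = (circD n Dset hDsym hD0).edgeFinset.card := by
        rw [Set.ncard_eq_toFinset_card']
        congr 1
      rw [hcnt]
      have heq : d * n = n * (2*m) := by rw [he2]; ring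
      omega
  · -- d odd
    have hd2 : d = 2 * m + 1 := by
      have := Nat.odd_iff.mp hdo
      omega
    rcases Nat.even_or_odd n with hne | hno
    · -- Case B : n even
      have hn2 : n % 2 = 0 := Nat.even_iff.mp hne
      set half : ZMod n := ((n/2 : ℕ) : ZMod n) with hhalf
      have hhalfD : half ∉ Dset := hnotD (n/2) (by omega) (by omega)
      have hhalfneg : -half = half := by
        have hsum2 : half + half = 0 := by
          rw [hhalf, ← Nat.cast_add]
          have : n/2 + n/2 = n := by omega
          rw [this, ZMod.natCast_self]
        rw [neg_eq_iff_add_eq_zero]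
        exact hsum2
      have hBsym : ∀ z ∈ insert half Dset, -z ∈ insert half Dset := by
        intro z hz
        rcases Finset.mem_insert.mp hz with rfl | hz
        · rw [hhalfneg]; exact Finset.mem_insert_self _ _
        · exact Finset.mem_insert_of_mem (hDsym z hz)
      have hB0 : (0 : ZMod n) ∉ insert half Dset := by
        rw [Finset.mem_insert]
        rintro (h | h)
        · rw [hhalf] at h
          rw [eq_comm, ZMod.natCast_eq_zero_iff] at h
          have := Nat.le_of_dvd (by omega) h
          omega
        · exact hD0 h
      have hBcard : (insert half Dset).card = 2*m + 1 := by
        rw [Finset.card_insert_of_notMem hhalfD, hDcard]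
      refine ⟨circD n (insert half Dset) hBsym hB0, ?_, ?_, ?_⟩
      · apply connected_of_adj_succ
        intro x
        show (x + 1) - x ∈ insert half Dset
        rw [add_sub_cancel_left]
        exact Finset.mem_insert_of_mem h1D
      · apply not_contains_broom_of_max_degree ha hak
        intro v
        rw [circD_degree, hBcard]
        omega
      · have hhand := (circD n (insert half Dset) hBsym hB0).sum_degrees_eq_twice_card_edges
        have hdeg : ∀ x, (circD n (insert half Dset) hBsym hB0).degree x = 2*m+1 := fun x => by
          rw [circD_degree, hBcard]
        rw [Finset.sum_congr rfl (fun x _ => hdeg x), Finset.sum_const, smul_eq_mul,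
          Finset.card_univ, ZMod.card] at hhand
        have hcnt : (circD n (insert half Dset) hBsym hB0).edgeSet.ncard
            = (circD n (insert half Dset) hBsym hB0).edgeFinset.card := by
          rw [Set.ncard_eq_toFinset_card']
          congr 1
        rw [hcnt]
        have heq : d * n = n * (2*m+1) := by rw [hd2]; ring
        omega
    · -- Case C : d odd, n odd
      have hn2 : n % 2 = 1 := Nat.odd_iff.mp hno
      set s : ℕ := (n-1)/2 with hsdef
      have hs : n = 2*s + 1 := by omega
      have hsm : m + 1 ≤ s := by omega
      have hs1 : 1 ≤ s := by omega
      have hs2 : 2*s < n := by omega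
      letI : DecidableRel (matchG n s hs1 hs2).Adj := Classical.decRel _
      letI : DecidableRel (circD n Dset hDsym hD0 ⊔ matchG n s hs1 hs2).Adj := Classical.decRel _
      have hsD : ((s:ℕ) : ZMod n) ∉ Dset := hnotD s (by omega) (by omega)
      have hsD' : (-((s:ℕ) : ZMod n)) ∉ Dset := by
        intro hcon
        have := hDsym _ hcon
        rw [neg_neg] at this
        exact hsD this
      have hxval : ∀ x : ZMod n, ((x.val : ℕ) : ZMod n) = x := fun x => ZMod.natCast_rightInverse x
      -- the matching neighbor is unique
      have hMnbr : ∀ x : ZMod n, ((matchG n s hs1 hs2).neighborFinset x) ⊆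
          {(if x.val ≤ s then ((x.val + s : ℕ) : ZMod n) else ((x.val - s : ℕ) : ZMod n))} := by
        intro x y hy
        rw [SimpleGraph.mem_neighborFinset] at hy
        rw [Finset.mem_singleton]
        rcases matchG_determined n s hs1 hs2 x y hy with ⟨h1, h2, rfl⟩ | ⟨h1, h2, rfl⟩
        · rw [if_pos h2]
        · rw [if_neg (by omega)]
      -- degree bound for the sup graph
      have hGdeg : ∀ x : ZMod n, (circD n Dset hDsym hD0 ⊔ matchG n s hs1 hs2).degree x ≤ 2*m + 1 := by
        intro x
        rw [← SimpleGraph.card_neighborFinset_eq_degree]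
        have hsub : (circD n Dset hDsym hD0 ⊔ matchG n s hs1 hs2).neighborFinset x ⊆
            (circD n Dset hDsym hD0).neighborFinset x ∪ (matchG n s hs1 hs2).neighborFinset x := by
          intro y hy
          rw [SimpleGraph.mem_neighborFinset, SimpleGraph.sup_adj] at hy
          rw [Finset.mem_union, SimpleGraph.mem_neighborFinset, SimpleGraph.mem_neighborFinset]
          exact hy
        refine (Finset.card_le_card hsub).trans ?_
        refine (Finset.card_union_le _ _).trans ?_
        have h1 : ((circD n Dset hDsym hD0).neighborFinset x).card = 2*m := by
          rw [SimpleGraph.card_neighborFinset_eq_degree, circD_degree, hDcard]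
        have h2 : ((matchG n s hs1 hs2).neighborFinset x).card ≤ 1 :=
          (Finset.card_le_card (hMnbr x)).trans (by simp)
        omega
      -- the difference along a matching edge is ± s
      have hdiffM : ∀ x y : ZMod n, (matchG n s hs1 hs2).Adj x y →
          y - x = ((s:ℕ) : ZMod n) ∨ y - x = -((s:ℕ) : ZMod n) := by
        intro x y hxy
        rcases matchG_determined n s hs1 hs2 x y hxy with ⟨h1, h2, rfl⟩ | ⟨h1, h2, rfl⟩
        · left
          have hcast : ((x.val + s : ℕ) : ZMod n) = x + ((s:ℕ) : ZMod n) := by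
            push_cast
            rw [hxval x]
          rw [hcast]
          ring
        · right
          have hcast : ((x.val - s : ℕ) : ZMod n) + ((s:ℕ) : ZMod n) = x := by
            rw [← Nat.cast_add, show x.val - s + s = x.val by omega]
            exact hxval x
          rw [eq_sub_of_add_eq hcast]
          ring
      have hdisjEdge : Disjoint (circD n Dset hDsym hD0).edgeFinset (matchG n s hs1 hs2).edgeFinset := by
        rw [Finset.disjoint_left]
        intro e heA heM
        induction e using Sym2.ind with
        | _ x y =>
          rw [SimpleGraph.mem_edgeFinset, SimpleGraph.mem_edgeSet] at heA heM
          have hyx : y - x ∈ Dset := heA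
          rcases hdiffM x y heM with h | h
          · rw [h] at hyx; exact hsD hyx
          · rw [h] at hyx; exact hsD' hyx
      -- count matching edges
      have hMcount : (matchG n s hs1 hs2).edgeFinset.card = s := by
        have heq : (matchG n s hs1 hs2).edgeFinset = (Finset.Icc 1 s).image
            (fun c : ℕ => s((c : ZMod n), ((c + s : ℕ) : ZMod n))) := by
          ext e
          induction e using Sym2.ind with
          | _ x y =>
            rw [SimpleGraph.mem_edgeFinset, SimpleGraph.mem_edgeSet, Finset.mem_image]
            constructor
            · rintro ⟨c, hc1, hc2, (⟨rfl, rfl⟩ | ⟨rfl, rfl⟩)⟩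
              · exact ⟨c, Finset.mem_Icc.mpr ⟨hc1, hc2⟩, rfl⟩
              · exact ⟨c, Finset.mem_Icc.mpr ⟨hc1, hc2⟩, Sym2.eq_swap⟩
            · rintro ⟨c, hc, he⟩
              rw [Finset.mem_Icc] at hc
              rcases Sym2.eq_iff.mp he with ⟨h1, h2⟩ | ⟨h1, h2⟩
              · exact ⟨c, hc.1, hc.2, Or.inl ⟨h1.symm, h2.symm⟩⟩
              · exact ⟨c, hc.1, hc.2, Or.inr ⟨h1.symm, h2.symm⟩⟩
        rw [heq, Finset.card_image_of_injOn, Nat.card_Icc]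
        · omega
        · intro c hc c' hc' hcc
          rw [Finset.coe_Icc, Set.mem_Icc] at hc hc'
          rcases Sym2.eq_iff.mp hcc with ⟨h1, h2⟩ | ⟨h1, h2⟩
          · have := congrArg ZMod.val h1
            rwa [ZMod.val_cast_of_lt (by omega), ZMod.val_cast_of_lt (by omega)] at this
          · have := congrArg ZMod.val h1
            rw [ZMod.val_cast_of_lt (by omega), ZMod.val_cast_of_lt (by omega)] at this
            omega
      -- count circulant edges
      have hAcount : 2 * (circD n Dset hDsym hD0).edgeFinset.card = n * (2*m) := by
        have hhand := (circD n Dset hDsym hD0).sum_degrees_eq_twice_card_edges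
        have hdeg : ∀ x, (circD n Dset hDsym hD0).degree x = 2*m := fun x => by
          rw [circD_degree, hDcard]
        rw [Finset.sum_congr rfl (fun x _ => hdeg x), Finset.sum_const, smul_eq_mul,
          Finset.card_univ, ZMod.card] at hhand
        omega
      -- total
      refine ⟨circD n Dset hDsym hD0 ⊔ matchG n s hs1 hs2, ?_, ?_, ?_⟩
      · apply connected_of_adj_succ
        intro x
        rw [SimpleGraph.sup_adj]
        left
        show (x + 1) - x ∈ Dset
        rw [add_sub_cancel_left]
        exact h1D
      · apply not_contains_broom_of_max_degree ha hak
        intro v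
        have := hGdeg v
        omega
      · have hcnt : (circD n Dset hDsym hD0 ⊔ matchG n s hs1 hs2).edgeSet.ncard
            = (circD n Dset hDsym hD0 ⊔ matchG n s hs1 hs2).edgeFinset.card := by
          rw [Set.ncard_eq_toFinset_card']
          congr 1
        rw [hcnt]
        have hsplit : (circD n Dset hDsym hD0 ⊔ matchG n s hs1 hs2).edgeFinset
            = (circD n Dset hDsym hD0).edgeFinset ∪ (matchG n s hs1 hs2).edgeFinset :=
          SimpleGraph.edgeFinset_sup
        rw [hsplit, Finset.card_union_of_disjoint hdisjEdge, hMcount]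
        have heq : d * n = n * (2*m) + n := by rw [hd2]; ring
        omega

end LowerMain

theorem exists_extremal_fin (k a n : ℕ) (ha : 2 ≤ a) (hak : 3 * a ≤ k) (hn : k ^ k ≤ n) :
    ∃ G : SimpleGraph (Fin n), G.Connected ∧ ¬ ContainsCopy (broom k a) G ∧
      G.edgeSet.ncard = (k - a) * n / 2 := by
  have hk6 : 6 ≤ k := by omega
  have hn1 : 1 ≤ n := by
    have : 1 ≤ k ^ k := Nat.one_le_pow _ _ (by omega)
    omega
  obtain ⟨n', rfl⟩ : ∃ n', n = n' + 1 := ⟨n - 1, by omega⟩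
  haveI : NeZero (n' + 1) := ⟨by omega⟩
  exact exists_extremal_zmod k a (n' + 1) ha hak hn

/-- Theorem (broom exact value): for `2 ≤ a ≤ k/3`, `ex_c(n, B(k,a)) = ⌊(k-a)n/2⌋` for
all large enough `n`. -/
theorem exConn_broom_eq (k a : ℕ) (ha : 2 ≤ a) (hak : 3 * a ≤ k) :
    ∃ n₀ : ℕ, ∀ n ≥ n₀, exConn n (broom k a) = (k - a) * n / 2 := by
  refine ⟨k ^ k, fun n hn => ?_⟩
  obtain ⟨G₀, hc₀, hf₀, he₀⟩ := exists_extremal_fin k a n ha hak hn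
  have hmem : (k - a) * n / 2 ∈
      {m | ∃ G : SimpleGraph (Fin n), G.Connected ∧ ¬ ContainsCopy (broom k a) G ∧
        m = G.edgeSet.ncard} := ⟨G₀, hc₀, hf₀, he₀.symm⟩
  have hub : ∀ x ∈ {m | ∃ G : SimpleGraph (Fin n), G.Connected ∧ ¬ ContainsCopy (broom k a) G ∧
      m = G.edgeSet.ncard}, x ≤ (k - a) * n / 2 := by
    rintro x ⟨G, hcx, hfx, rfl⟩
    exact edge_bound_of_broomFree k a n ha hak hn G hcx hfx
  unfold exConn
  exact le_antisymm (csSup_le ⟨_, hmem⟩ hub)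
    (le_csSup ⟨(k - a) * n / 2, fun x hx => hub x hx⟩ hmem)
end

section
/- Let j ≥ 3 and let T = S_{2,1,…,1} be the spider with one leg of two edges and j−1 legs of one edge each (so T has j+2 vertices and maximum degree Δ(T) = j). Then for every n ≥ |T|, ex_c(n,T) = ⌊n(Δ(T)−1)/2⌋. -/
open SimpleGraph

namespace SpiderAux

open Finset

/-- The set of allowed "differences" for the extremal circulant-type graph. -/
def Aset (n r : ℕ) (modd : Bool) : Finset ℕ :=
  (Finset.Icc 1 r ∪ Finset.Icc (n - r) (n - 1)) ∪ (if modd then {(n + 1) / 2} else ∅)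

lemma mem_Aset {n r : ℕ} {modd : Bool} {δ : ℕ} :
    δ ∈ Aset n r modd ↔
      (1 ≤ δ ∧ δ ≤ r) ∨ (n - r ≤ δ ∧ δ ≤ n - 1) ∨ (modd = true ∧ δ = (n + 1) / 2) := by
  cases modd <;> simp [Aset, Finset.mem_union, Finset.mem_Icc] <;> tauto

lemma Aset_bounds {n r : ℕ} {modd : Bool} (hr : 1 ≤ r) (hn : 2 * r + 3 ≤ n) {δ : ℕ}
    (h : δ ∈ Aset n r modd) : 1 ≤ δ ∧ δ ≤ n - 1 := by
  rw [mem_Aset] at h; omega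

/-- The extremal graph: a circulant-type graph on `Fin n`. -/
def circ (n r : ℕ) (modd : Bool) : SimpleGraph (Fin n) :=
  SimpleGraph.fromRel fun i k => ((k : ℕ) - (i : ℕ)) ∈ Aset n r modd

instance (n r : ℕ) (modd : Bool) : DecidableRel (circ n r modd).Adj := fun a b =>
  decidable_of_iff _ (SimpleGraph.fromRel_adj _ a b).symm

lemma circ_adj {n r : ℕ} {modd : Bool} (hr : 1 ≤ r) (hn : 2 * r + 3 ≤ n) {i k : Fin n} :
    (circ n r modd).Adj i k ↔
      (((i : ℕ) < k ∧ (k : ℕ) - i ∈ Aset n r modd) ∨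
        ((k : ℕ) < i ∧ (i : ℕ) - k ∈ Aset n r modd)) := by
  rw [circ, SimpleGraph.fromRel_adj]
  constructor
  · rintro ⟨hne, h | h⟩
    · have := Aset_bounds hr hn h
      exact Or.inl ⟨by omega, h⟩
    · have := Aset_bounds hr hn h
      exact Or.inr ⟨by omega, h⟩
  · rintro (⟨hlt, h⟩ | ⟨hlt, h⟩)
    · exact ⟨by rintro rfl; omega, Or.inl h⟩
    · exact ⟨by rintro rfl; omega, Or.inr h⟩

lemma circ_card_edges {n r : ℕ} {modd : Bool} (hr : 1 ≤ r) (hn : 2 * r + 3 ≤ n) :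
    (circ n r modd).edgeFinset.card = ∑ δ ∈ Aset n r modd, (n - δ) := by
  classical
  have hn0 : 0 < n := by omega
  have hcard : ∑ δ ∈ Aset n r modd, (n - δ) =
      ((Aset n r modd).sigma fun δ => Finset.range (n - δ)).card := by
    rw [Finset.card_sigma]; simp
  rw [hcard]
  refine (Finset.card_bij (fun p _ =>
      s((⟨p.2 % n, Nat.mod_lt _ hn0⟩ : Fin n), (⟨(p.2 + p.1) % n, Nat.mod_lt _ hn0⟩ : Fin n)))
      ?_ ?_ ?_).symm
  · rintro ⟨δ, m⟩ hp
    simp only [Finset.mem_sigma, Finset.mem_range] at hp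
    obtain ⟨h1, h2⟩ := hp
    have hb := Aset_bounds hr hn h1
    have e1 : m % n = m := Nat.mod_eq_of_lt (by omega)
    have e2 : (m + δ) % n = m + δ := Nat.mod_eq_of_lt (by omega)
    rw [SimpleGraph.mem_edgeFinset, SimpleGraph.mem_edgeSet, circ_adj hr hn]
    left
    constructor
    · simp only [e1, e2]; omega
    · simp only [e1, e2]
      rw [show m + δ - m = δ by omega]
      exact h1
  · rintro ⟨δ, m⟩ hp ⟨δ', m'⟩ hp' h
    simp only [Finset.mem_sigma, Finset.mem_range] at hp hp'
    obtain ⟨h1, h2⟩ := hp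
    obtain ⟨h1', h2'⟩ := hp'
    have hb := Aset_bounds hr hn h1
    have hb' := Aset_bounds hr hn h1'
    have e1 : m % n = m := Nat.mod_eq_of_lt (by omega)
    have e2 : (m + δ) % n = m + δ := Nat.mod_eq_of_lt (by omega)
    have e1' : m' % n = m' := Nat.mod_eq_of_lt (by omega)
    have e2' : (m' + δ') % n = m' + δ' := Nat.mod_eq_of_lt (by omega)
    rw [Sym2.eq_iff] at h
    rcases h with ⟨ha, hb2⟩ | ⟨ha, hb2⟩ <;>
      · rw [Fin.mk.injEq] at ha hb2
        rw [e1, e2, e1', e2'] at *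
        have : δ = δ' ∧ m = m' := by omega
        simp [this.1, this.2]
  · intro e he
    induction e using Sym2.ind with
    | _ a b =>
      rw [SimpleGraph.mem_edgeFinset, SimpleGraph.mem_edgeSet, circ_adj hr hn] at he
      rcases he with ⟨hlt, hmem⟩ | ⟨hlt, hmem⟩
      · refine ⟨⟨(b : ℕ) - a, (a : ℕ)⟩, ?_, ?_⟩
        · simp only [Finset.mem_sigma, Finset.mem_range]
          have hb2 := Aset_bounds hr hn hmem
          have := b.isLt
          exact ⟨hmem, by omega⟩
        · dsimp only
          have h1 : (⟨(a : ℕ) % n, Nat.mod_lt _ hn0⟩ : Fin n) = a :=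
            Fin.ext (Nat.mod_eq_of_lt a.isLt)
          have h2 : (⟨((a : ℕ) + ((b : ℕ) - (a : ℕ))) % n, Nat.mod_lt _ hn0⟩ : Fin n) = b := by
            apply Fin.ext
            show ((a : ℕ) + ((b : ℕ) - (a : ℕ))) % n = (b : ℕ)
            rw [show (a : ℕ) + ((b : ℕ) - (a : ℕ)) = (b : ℕ) by omega]
            exact Nat.mod_eq_of_lt b.isLt
          rw [h1, h2]
      · refine ⟨⟨(a : ℕ) - b, (b : ℕ)⟩, ?_, ?_⟩
        · simp only [Finset.mem_sigma, Finset.mem_range]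
          have hb2 := Aset_bounds hr hn hmem
          have := a.isLt
          exact ⟨hmem, by omega⟩
        · dsimp only
          have h1 : (⟨(b : ℕ) % n, Nat.mod_lt _ hn0⟩ : Fin n) = b :=
            Fin.ext (Nat.mod_eq_of_lt b.isLt)
          have h2 : (⟨((b : ℕ) + ((a : ℕ) - (b : ℕ))) % n, Nat.mod_lt _ hn0⟩ : Fin n) = a := by
            apply Fin.ext
            show ((b : ℕ) + ((a : ℕ) - (b : ℕ))) % n = (a : ℕ)
            rw [show (b : ℕ) + ((a : ℕ) - (b : ℕ)) = (a : ℕ) by omega]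
            exact Nat.mod_eq_of_lt a.isLt
          rw [h1, h2, Sym2.eq_swap]

lemma sum_Icc_pair {n : ℕ} : ∀ r, 2 * r ≤ n →
    ((∑ δ ∈ Finset.Icc 1 r, (n - δ)) + ∑ δ ∈ Finset.Icc (n - r) (n - 1), (n - δ)) = n * r := by
  intro r
  induction r with
  | zero =>
    intro _
    rcases Nat.eq_zero_or_pos n with h | h
    · subst h; simp
    · rw [Finset.Icc_eq_empty (by omega), Finset.Icc_eq_empty (by omega)]
      simp
  | succ r ih =>
    intro h
    rw [show Finset.Icc 1 (r + 1) = insert (r + 1) (Finset.Icc 1 r) from by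
        ext x; simp [Finset.mem_Icc]; omega,
      show Finset.Icc (n - (r + 1)) (n - 1) = insert (n - (r + 1)) (Finset.Icc (n - r) (n - 1))
        from by ext x; simp [Finset.mem_Icc]; omega,
      Finset.sum_insert (by rw [Finset.mem_Icc]; omega),
      Finset.sum_insert (by rw [Finset.mem_Icc]; omega)]
    have h1 := ih (by omega)
    have h2 : n * (r + 1) = n * r + n := by ring
    omega

lemma sum_Aset {n r : ℕ} {modd : Bool} (hr : 1 ≤ r) (hn : 2 * r + 3 ≤ n) :
    ∑ δ ∈ Aset n r modd, (n - δ) = n * r + (if modd then n - (n + 1) / 2 else 0) := by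
  have d12 : Disjoint (Finset.Icc 1 r) (Finset.Icc (n - r) (n - 1)) := by
    rw [Finset.disjoint_left]; intro x hx hx'
    rw [Finset.mem_Icc] at hx hx'; omega
  have d3 : Disjoint (Finset.Icc 1 r ∪ Finset.Icc (n - r) (n - 1))
      (if modd then ({(n + 1) / 2} : Finset ℕ) else ∅) := by
    cases modd
    · simp
    · rw [Finset.disjoint_right]; intro x hx hx'
      simp at hx
      rw [Finset.mem_union, Finset.mem_Icc, Finset.mem_Icc] at hx'
      omega
  rw [Aset, Finset.sum_union d3, Finset.sum_union d12, sum_Icc_pair r (by omega)]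
  cases modd <;> simp

lemma card_filter_le_Icc (a b x : ℕ) :
    ((Finset.Icc a b).filter (fun δ => δ ≤ x)).card = min b x + 1 - a := by
  rw [show (Finset.Icc a b).filter (fun δ => δ ≤ x) = Finset.Icc a (min b x) from by
    ext m; simp [Finset.mem_Icc, Finset.mem_filter]; omega, Nat.card_Icc]

lemma key_count {n r : ℕ} {modd : Bool} (hr : 1 ≤ r) (hn : 2 * r + 3 ≤ n) {x y : ℕ}
    (hxy : x + y = n - 1) :
    ((Aset n r modd).filter (fun δ => δ ≤ x)).card +
      ((Aset n r modd).filter (fun δ => δ ≤ y)).card ≤ 2 * r + (if modd then 1 else 0) := by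
  have hone : ∀ z : ℕ,
      ((if modd then ({(n + 1) / 2} : Finset ℕ) else ∅).filter (fun δ => δ ≤ z)).card =
        if modd then (if (n + 1) / 2 ≤ z then 1 else 0) else 0 := by
    intro z
    cases modd
    · simp
    · by_cases hz : (n + 1) / 2 ≤ z <;> simp [Finset.filter_singleton, hz]
  rw [Aset]
  rw [Finset.filter_union, Finset.filter_union, Finset.filter_union, Finset.filter_union]
  refine le_trans (add_le_add (Finset.card_union_le _ _) (Finset.card_union_le _ _)) ?_
  refine le_trans (add_le_add (Nat.add_le_add_right (Finset.card_union_le _ _) _)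
    (Nat.add_le_add_right (Finset.card_union_le _ _) _)) ?_
  rw [card_filter_le_Icc, card_filter_le_Icc, card_filter_le_Icc, card_filter_le_Icc,
    hone, hone]
  rcases modd with _ | _
  · norm_num
    omega
  · norm_num
    split_ifs <;> omega

lemma circ_degree_le {n r : ℕ} {modd : Bool} (hr : 1 ≤ r) (hn : 2 * r + 3 ≤ n) (i : Fin n) :
    (circ n r modd).degree i ≤ 2 * r + (if modd then 1 else 0) := by
  classical
  rw [← SimpleGraph.card_neighborFinset_eq_degree]
  have hmap : ∀ k ∈ (circ n r modd).neighborFinset i,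
      (if (i : ℕ) < (k : ℕ) then ((k : ℕ) - i) + n else (i : ℕ) - k) ∈
        ((Aset n r modd).filter (fun δ => δ ≤ (i : ℕ))) ∪
          ((Aset n r modd).filter (fun δ => δ ≤ n - 1 - (i : ℕ))).image (· + n) := by
    intro k hk
    rw [SimpleGraph.mem_neighborFinset, circ_adj hr hn] at hk
    rcases hk with ⟨hlt, hmem⟩ | ⟨hlt, hmem⟩
    · rw [if_pos hlt, Finset.mem_union]
      right
      rw [Finset.mem_image]
      exact ⟨(k : ℕ) - i, Finset.mem_filter.mpr ⟨hmem, by have := k.isLt; omega⟩, rfl⟩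
    · rw [if_neg (by omega), Finset.mem_union]
      left
      exact Finset.mem_filter.mpr ⟨hmem, by omega⟩
  have hinj : Set.InjOn (fun k : Fin n =>
      (if (i : ℕ) < (k : ℕ) then ((k : ℕ) - i) + n else (i : ℕ) - k))
      ((circ n r modd).neighborFinset i) := by
    intro a ha b hb hab
    rw [Finset.mem_coe, SimpleGraph.mem_neighborFinset, circ_adj hr hn] at ha hb
    simp only at hab
    apply Fin.ext
    split_ifs at hab <;> omega
  calc ((circ n r modd).neighborFinset i).card
      ≤ (((Aset n r modd).filter (fun δ => δ ≤ (i : ℕ))) ∪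
          ((Aset n r modd).filter (fun δ => δ ≤ n - 1 - (i : ℕ))).image (· + n)).card :=
        Finset.card_le_card_of_injOn
          (fun k : Fin n => (if (i : ℕ) < (k : ℕ) then ((k : ℕ) - i) + n else (i : ℕ) - k))
          hmap hinj
    _ ≤ ((Aset n r modd).filter (fun δ => δ ≤ (i : ℕ))).card +
        (((Aset n r modd).filter (fun δ => δ ≤ n - 1 - (i : ℕ))).image (· + n)).card :=
        Finset.card_union_le _ _
    _ ≤ ((Aset n r modd).filter (fun δ => δ ≤ (i : ℕ))).card +
        ((Aset n r modd).filter (fun δ => δ ≤ n - 1 - (i : ℕ))).card := by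
        exact Nat.add_le_add_left Finset.card_image_le _
    _ ≤ 2 * r + (if modd then 1 else 0) :=
        key_count hr hn (by have := i.isLt; omega)

lemma circ_connected {n r : ℕ} {modd : Bool} (hr : 1 ≤ r) (hn : 2 * r + 3 ≤ n) :
    (circ n r modd).Connected := by
  have hn0 : 0 < n := by omega
  have adj1 : ∀ m (hm : m + 1 < n),
      (circ n r modd).Adj ⟨m, by omega⟩ ⟨m + 1, hm⟩ := by
    intro m hm
    rw [circ_adj hr hn]
    left
    refine ⟨Nat.lt_succ_self m, ?_⟩
    show ((m + 1 : ℕ) - m) ∈ Aset n r modd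
    rw [show (m + 1 : ℕ) - m = 1 by omega, mem_Aset]
    left; omega
  have key : ∀ m (hm : m < n), (circ n r modd).Reachable ⟨0, hn0⟩ ⟨m, hm⟩ := by
    intro m
    induction m with
    | zero => intro hm; exact SimpleGraph.Reachable.refl _
    | succ m ih => intro hm; exact (ih (by omega)).trans (adj1 m hm).reachable
  rw [SimpleGraph.connected_iff]
  refine ⟨fun x y => ?_, ⟨⟨0, hn0⟩⟩⟩
  exact (key x.1 x.2).symm.trans (key y.1 y.2)

lemma not_contains (j n : ℕ) (hj : 3 ≤ j) (G : SimpleGraph (Fin n)) [DecidableRel G.Adj]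
    (hdeg : ∀ v, G.degree v ≤ j - 1) : ¬ ContainsCopy (broom (j + 2) 3) G := by
  classical
  rintro ⟨f, hf⟩
  have hz : ((⟨0, by omega⟩ : Fin (j + 2)) : ℕ) = 0 := rfl
  set g : Fin j → Fin (j + 2) :=
    fun t => if t.val = 0 then ⟨1, by omega⟩ else ⟨t.val + 2, by omega⟩ with hg
  have hgval : ∀ t : Fin j, (g t : ℕ) = if t.val = 0 then 1 else t.val + 2 := by
    intro t; by_cases h : t.val = 0 <;> simp [hg, h]
  have hginj : Function.Injective g := by
    intro a b hab
    have hab' : (g a : ℕ) = (g b : ℕ) := by rw [hab]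
    rw [hgval, hgval] at hab'
    apply Fin.ext
    split_ifs at hab' <;> omega
  have hadj : ∀ t : Fin j, (broom (j + 2) 3).Adj ⟨0, by omega⟩ (g t) := by
    intro t
    rw [broom, SimpleGraph.fromRel_adj]
    have hgt := hgval t
    constructor
    · intro h
      have h' : ((⟨0, by omega⟩ : Fin (j + 2)) : ℕ) = (g t : ℕ) := by rw [h]
      rw [hz, hgt] at h'
      split_ifs at h' <;> omega
    · left
      rw [hz, hgt]
      have := t.isLt
      split_ifs with h <;> omega
  have hsub : (Finset.univ.image (fun t => f (g t))) ⊆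
      G.neighborFinset (f ⟨0, by omega⟩) := by
    intro x hx
    rw [Finset.mem_image] at hx
    obtain ⟨t, _, ht⟩ := hx
    rw [SimpleGraph.mem_neighborFinset, ← ht]
    exact hf (hadj t)
  have himg2 : (Finset.univ.image (fun t => f (g t))).card = j := by
    have hinj2 : Function.Injective (fun t => f (g t)) := fun a b hab =>
      hginj (f.injective hab)
    rw [Finset.card_image_of_injective _ hinj2, Finset.card_univ, Fintype.card_fin]
  have hle := Finset.card_le_card hsub
  rw [himg2, SimpleGraph.card_neighborFinset_eq_degree] at hle
  have := hdeg (f ⟨0, by omega⟩)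
  omega

lemma contains_copy {j n : ℕ} (hj : 3 ≤ j) (G : SimpleGraph (Fin n)) {v u w : Fin n}
    (hvu : G.Adj v u) (huw : G.Adj u w) (hwv : w ≠ v) (s : Finset (Fin n))
    (hcard : s.card = j - 1) (hsub : ∀ x ∈ s, G.Adj v x) (hu : u ∉ s) (hw : w ∉ s) :
    ContainsCopy (broom (j + 2) 3) G := by
  classical
  have e := s.orderIsoOfFin hcard
  have hv : v ∉ s := fun h => (G.irrefl (hsub v h))
  set F : ℕ → Fin n := fun m =>
    if m = 0 then v else if m = 1 then u else if m = 2 then w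
    else ↑(e ⟨min (m - 3) (j - 2), by omega⟩) with hF
  have hFe : ∀ m, 3 ≤ m → F m ∈ s := by
    intro m hm
    simp only [hF]
    rw [if_neg (by omega), if_neg (by omega), if_neg (by omega)]
    exact (e _).2
  have hne_s : ∀ x ∈ s, x ≠ v ∧ x ≠ u ∧ x ≠ w := fun x hx =>
    ⟨fun hh => hv (hh ▸ hx), fun hh => hu (hh ▸ hx), fun hh => hw (hh ▸ hx)⟩
  have hinj : ∀ m m', m < j + 2 → m' < j + 2 → F m = F m' → m = m' := by
    intro m m' hm hm' h
    have hvu' := hvu.ne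
    have huw' := huw.ne
    have hvw' : v ≠ w := fun hh => hwv hh.symm
    by_cases h1 : m = 0 <;> by_cases h2 : m = 1 <;> by_cases h3 : m = 2 <;>
      by_cases k1 : m' = 0 <;> by_cases k2 : m' = 1 <;> by_cases k3 : m' = 2 <;>
      simp only [hF, h1, h2, h3, k1, k2, k3, if_true, if_false, eq_self_iff_true] at h <;>
      first
        | omega
        | exact absurd h hvu'
        | exact absurd h.symm hvu'
        | exact absurd h huw'
        | exact absurd h.symm huw'
        | exact absurd h hvw'
        | exact absurd h.symm hvw'
        | exact absurd h.symm (hne_s _ (e _).2).1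
        | exact absurd h (hne_s _ (e _).2).1
        | exact absurd h.symm (hne_s _ (e _).2).2.1
        | exact absurd h (hne_s _ (e _).2).2.1
        | exact absurd h.symm (hne_s _ (e _).2).2.2
        | exact absurd h (hne_s _ (e _).2).2.2
        | (have he2 := e.injective (Subtype.coe_injective h)
           rw [Fin.mk.injEq] at he2
           omega)
  refine ⟨⟨fun a => F a.val, fun a b hab => Fin.ext (hinj _ _ a.isLt b.isLt hab)⟩, ?_⟩
  have hGadj : ∀ m m', m < j + 2 → m' < j + 2 →
      ((m + 1 = m' ∧ m' < 3) ∨ (m = 0 ∧ 3 ≤ m')) → G.Adj (F m) (F m') := by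
    intro m m' hm hm' hr'
    rcases hr' with ⟨hmm, h3⟩ | ⟨hm0, h3⟩
    · rcases (by omega : (m = 0 ∧ m' = 1) ∨ (m = 1 ∧ m' = 2)) with ⟨rfl, rfl⟩ | ⟨rfl, rfl⟩
      · simpa only [hF, if_pos rfl, if_neg (by omega : (1:ℕ) ≠ 0), if_pos rfl, if_true] using hvu
      · simp only [hF, if_neg (by omega : (1:ℕ) ≠ 0), if_pos rfl,
          if_neg (by omega : (2:ℕ) ≠ 0), if_neg (by omega : (2:ℕ) ≠ 1)]
        exact huw
    · subst hm0
      have h1 : F 0 = v := by simp only [hF, if_pos rfl]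
      rw [h1]
      exact hsub _ (hFe m' h3)
  intro a b hab
  rw [broom, SimpleGraph.fromRel_adj] at hab
  obtain ⟨hne, hrel⟩ := hab
  show G.Adj (F a.val) (F b.val)
  rcases hrel with h | h
  · exact hGadj a.val b.val a.isLt b.isLt h
  · exact (hGadj b.val a.val b.isLt a.isLt h).symm

lemma upper_bound (j n : ℕ) (hj : 3 ≤ j) (hn : j + 2 ≤ n) (G : SimpleGraph (Fin n))
    [DecidableRel G.Adj] (hc : G.Connected) (hfree : ¬ ContainsCopy (broom (j + 2) 3) G) :
    G.edgeFinset.card ≤ n * (j - 1) / 2 := by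
  classical
  by_cases hdeg : ∀ v, G.degree v ≤ j - 1
  · have h2 := SimpleGraph.sum_degrees_eq_twice_card_edges G
    have h3 : ∑ v, G.degree v ≤ n * (j - 1) := by
      calc ∑ v, G.degree v ≤ ∑ _v : Fin n, (j - 1) := Finset.sum_le_sum fun v _ => hdeg v
        _ = n * (j - 1) := by simp [Finset.sum_const, Finset.card_univ, mul_comm]
    omega
  · push_neg at hdeg
    obtain ⟨v, hv⟩ := hdeg
    have hvdeg : j ≤ G.degree v := by omega
    by_cases hw : ∃ u w, G.Adj v u ∧ G.Adj u w ∧ w ≠ v ∧ ¬ G.Adj v w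
    · exfalso
      apply hfree
      obtain ⟨u, w, h1, h2, h3, h4⟩ := hw
      obtain ⟨s, hs_sub, hs_card⟩ := Finset.exists_subset_card_eq
        (s := (G.neighborFinset v).erase u) (n := j - 1) (by
          rw [Finset.card_erase_of_mem (by rwa [SimpleGraph.mem_neighborFinset]),
            SimpleGraph.card_neighborFinset_eq_degree]
          omega)
      refine contains_copy hj G h1 h2 h3 s hs_card ?_ ?_ ?_
      · intro x hx
        have := hs_sub hx
        rw [Finset.mem_erase, SimpleGraph.mem_neighborFinset] at this
        exact this.2
      · intro hus
        exact (Finset.mem_erase.mp (hs_sub hus)).1 rfl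
      · intro hws
        have := hs_sub hws
        rw [Finset.mem_erase, SimpleGraph.mem_neighborFinset] at this
        exact h4 this.2
    · push_neg at hw
      have hAll : ∀ x : Fin n, x ≠ v → G.Adj v x := by
        intro x hx
        obtain ⟨p⟩ := hc.preconnected v x
        have key : ∀ (a b : Fin n), G.Walk a b → (a = v ∨ G.Adj v a) → (b = v ∨ G.Adj v b) := by
          intro a b q
          induction q with
          | nil => exact id
          | @cons x' y' z' hxy q ih =>
            intro hx'
            apply ih
            rcases hx' with rfl | hvx
            · exact Or.inr hxy
            · by_cases hy : y' = v
              · exact Or.inl hy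
              · exact Or.inr (hw x' y' hvx hxy hy)
        rcases key v x p (Or.inl rfl) with h | h
        · exact absurd h hx
        · exact h
      have hvdeg' : G.degree v = n - 1 := by
        have hlt : G.degree v < n := by
          have := G.degree_lt_card_verts v
          simpa using this
        have hge : n - 1 ≤ G.degree v := by
          have hsub2 : Finset.univ.erase v ⊆ G.neighborFinset v := by
            intro x hx
            rw [SimpleGraph.mem_neighborFinset]
            exact hAll x (Finset.mem_erase.mp hx).1
          have := Finset.card_le_card hsub2
          rw [Finset.card_erase_of_mem (Finset.mem_univ v), Finset.card_univ, Fintype.card_fin,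
            SimpleGraph.card_neighborFinset_eq_degree] at this
          exact this
        omega
      by_cases hedge : ∃ u w, G.Adj v u ∧ G.Adj v w ∧ G.Adj u w
      · exfalso
        apply hfree
        obtain ⟨u, w, h1, h2, h3⟩ := hedge
        obtain ⟨s, hs_sub, hs_card⟩ := Finset.exists_subset_card_eq
          (s := ((G.neighborFinset v).erase u).erase w) (n := j - 1) (by
            rw [Finset.card_erase_of_mem (by
                rw [Finset.mem_erase, SimpleGraph.mem_neighborFinset]
                exact ⟨h3.ne', h2⟩),
              Finset.card_erase_of_mem (by rwa [SimpleGraph.mem_neighborFinset]),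
              SimpleGraph.card_neighborFinset_eq_degree, hvdeg']
            omega)
        refine contains_copy hj G h1 h3 h2.ne' s hs_card ?_ ?_ ?_
        · intro x hx
          have := hs_sub hx
          rw [Finset.mem_erase, Finset.mem_erase, SimpleGraph.mem_neighborFinset] at this
          exact this.2.2
        · intro hus
          exact (Finset.mem_erase.mp (Finset.mem_of_mem_erase (hs_sub hus))).1 rfl
        · intro hws
          exact (Finset.mem_erase.mp (hs_sub hws)).1 rfl
      · push_neg at hedge
        have hall_inc : G.edgeFinset ⊆ G.incidenceFinset v := by
          intro e he
          rw [SimpleGraph.mem_edgeFinset] at he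
          rw [SimpleGraph.mem_incidenceFinset]
          refine ⟨he, ?_⟩
          revert he
          induction e using Sym2.ind with
          | _ a b =>
            intro hab
            rw [SimpleGraph.mem_edgeSet] at hab
            rw [Sym2.mem_iff]
            by_contra hcon
            push_neg at hcon
            exact hedge a b (hAll a (fun hh => hcon.1 hh.symm))
              (hAll b (fun hh => hcon.2 hh.symm)) hab
        have hle := Finset.card_le_card hall_inc
        rw [SimpleGraph.card_incidenceFinset_eq_degree, hvdeg'] at hle
        have h2n : 2 * n ≤ n * (j - 1) := by
          calc 2 * n = n * 2 := by ring
            _ ≤ n * (j - 1) := Nat.mul_le_mul_left n (by omega)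
        omega

end SpiderAux

/-- Theorem: for `j ≥ 3`, the spider `T = S_{2,1,…,1}` with one leg of two edges and
`j-1` legs of one edge (which is the broom `B(j+2,3)`, on `j+2` vertices, with maximum
degree `Δ(T) = j`) satisfies `ex_c(n,T) = ⌊n(Δ(T)-1)/2⌋` for every `n ≥ |T| = j+2`. -/
theorem exConn_spider_two_one (j : ℕ) (hj : 3 ≤ j) (n : ℕ) (hn : j + 2 ≤ n) :
    exConn n (broom (j + 2) 3) = n * (j - 1) / 2 := by
  classical
  set d := j - 1 with hd
  set r := d / 2 with hrdef
  set modd : Bool := decide (d % 2 = 1) with hmodd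
  have hr : 1 ≤ r := by omega
  have hn2 : 2 * r + 3 ≤ n := by omega
  have hite1 : (if modd then 1 else 0) = d % 2 := by
    by_cases hdm : d % 2 = 1
    · simp [hmodd, hdm]
    · simp [hmodd, hdm]; omega
  have hite2 : (if modd then n - (n + 1) / 2 else 0) = (n - (n + 1) / 2) * (d % 2) := by
    by_cases hdm : d % 2 = 1
    · simp [hmodd, hdm]
    · simp [hmodd, hdm]; omega
  have hkey : n * d = 2 * (n * r) + n * (d % 2) := by
    calc n * d = n * (2 * r + d % 2) := by rw [show 2 * r + d % 2 = d by omega]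
      _ = 2 * (n * r) + n * (d % 2) := by ring
  have hcount : (SpiderAux.circ n r modd).edgeSet.ncard = n * d / 2 := by
    rw [← SimpleGraph.coe_edgeFinset, Set.ncard_coe_finset,
      SpiderAux.circ_card_edges hr hn2, SpiderAux.sum_Aset hr hn2, hite2]
    rcases (by omega : d % 2 = 0 ∨ d % 2 = 1) with h2 | h2
    · rw [h2] at hkey ⊢; omega
    · rw [h2] at hkey ⊢; omega
  apply IsGreatest.csSup_eq
  constructor
  · exact ⟨SpiderAux.circ n r modd, SpiderAux.circ_connected hr hn2,
      SpiderAux.not_contains j n hj _ (fun v => by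
        have := SpiderAux.circ_degree_le hr hn2 (modd := modd) v
        omega),
      hcount.symm⟩
  · rintro m ⟨G, hc, hfree, rfl⟩
    letI : DecidableRel G.Adj := Classical.decRel _
    rw [← SimpleGraph.coe_edgeFinset, Set.ncard_coe_finset]
    exact SpiderAux.upper_bound j n hj hn G hc hfree
end

section
/- Let D_{2,2} be the double star on 6 vertices in which the two adjacent centers each have two pendant leaves (so both centers have degree 3). Then for every n ≥ 6, ex_c(n, D_{2,2}) = 2n − 4. -/
open SimpleGraph

/-- The double star `D_{2,2}` on 6 vertices: adjacent centers `0` and `1`, with `0`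
adjacent to the leaves `2, 3` and `1` adjacent to the leaves `4, 5`. -/
def doubleStar22 : SimpleGraph (Fin 6) :=
  SimpleGraph.fromRel (fun i j =>
    (i = 0 ∧ j = 1) ∨ (i = 0 ∧ j = 2) ∨ (i = 0 ∧ j = 3) ∨ (i = 1 ∧ j = 4) ∨ (i = 1 ∧ j = 5))

open Finset

instance : DecidableRel doubleStar22.Adj := fun a b =>
  decidable_of_iff _ (SimpleGraph.fromRel_adj _ a b).symm

set_option synthInstance.maxSize 2000 in
set_option synthInstance.maxHeartbeats 1000000 in
set_option maxHeartbeats 1000000 in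
lemma embed_doubleStar {n : ℕ} (G : SimpleGraph (Fin n))
    {x y a1 a2 b1 b2 : Fin n}
    (hxy : G.Adj x y) (ha1 : G.Adj x a1) (ha2 : G.Adj x a2)
    (hb1 : G.Adj y b1) (hb2 : G.Adj y b2)
    (ha12 : a1 ≠ a2) (hb12 : b1 ≠ b2)
    (ha1y : a1 ≠ y) (ha2y : a2 ≠ y) (hb1x : b1 ≠ x) (hb2x : b2 ≠ x)
    (hab11 : a1 ≠ b1) (hab12 : a1 ≠ b2) (hab21 : a2 ≠ b1) (hab22 : a2 ≠ b2) :
    ContainsCopy doubleStar22 G := by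
  have hxa1 : x ≠ a1 := fun h => G.irrefl (h ▸ ha1)
  have hxa2 : x ≠ a2 := fun h => G.irrefl (h ▸ ha2)
  have hyb1 : y ≠ b1 := fun h => G.irrefl (h ▸ hb1)
  have hyb2 : y ≠ b2 := fun h => G.irrefl (h ▸ hb2)
  have hxb1 : x ≠ b1 := hb1x.symm
  have hxb2 : x ≠ b2 := hb2x.symm
  have hya1 : y ≠ a1 := ha1y.symm
  have hya2 : y ≠ a2 := ha2y.symm
  have hxy' : x ≠ y := G.ne_of_adj hxy
  refine ⟨⟨![x, y, a1, a2, b1, b2], ?_⟩, ?_⟩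
  · intro i j hij
    by_contra hne
    have hd : ∀ i j : Fin 6, i ≠ j → (i = 0 ∧ j = 1) ∨ (i = 0 ∧ j = 2) ∨ (i = 0 ∧ j = 3) ∨ (i = 0 ∧ j = 4) ∨ (i = 0 ∧ j = 5) ∨ (i = 1 ∧ j = 0) ∨ (i = 1 ∧ j = 2) ∨ (i = 1 ∧ j = 3) ∨ (i = 1 ∧ j = 4) ∨ (i = 1 ∧ j = 5) ∨ (i = 2 ∧ j = 0) ∨ (i = 2 ∧ j = 1) ∨ (i = 2 ∧ j = 3) ∨ (i = 2 ∧ j = 4) ∨ (i = 2 ∧ j = 5) ∨ (i = 3 ∧ j = 0) ∨ (i = 3 ∧ j = 1) ∨ (i = 3 ∧ j = 2) ∨ (i = 3 ∧ j = 4) ∨ (i = 3 ∧ j = 5) ∨ (i = 4 ∧ j = 0) ∨ (i = 4 ∧ j = 1) ∨ (i = 4 ∧ j = 2) ∨ (i = 4 ∧ j = 3) ∨ (i = 4 ∧ j = 5) ∨ (i = 5 ∧ j = 0) ∨ (i = 5 ∧ j = 1) ∨ (i = 5 ∧ j = 2) ∨ (i = 5 ∧ j = 3) ∨ (i = 5 ∧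 j = 4) := by decide
    rcases hd i j hne with ⟨rfl,rfl⟩|⟨rfl,rfl⟩|⟨rfl,rfl⟩|⟨rfl,rfl⟩|⟨rfl,rfl⟩|⟨rfl,rfl⟩|⟨rfl,rfl⟩|⟨rfl,rfl⟩|⟨rfl,rfl⟩|⟨rfl,rfl⟩|⟨rfl,rfl⟩|⟨rfl,rfl⟩|⟨rfl,rfl⟩|⟨rfl,rfl⟩|⟨rfl,rfl⟩|⟨rfl,rfl⟩|⟨rfl,rfl⟩|⟨rfl,rfl⟩|⟨rfl,rfl⟩|⟨rfl,rfl⟩|⟨rfl,rfl⟩|⟨rfl,rfl⟩|⟨rfl,rfl⟩|⟨rfl,rfl⟩|⟨rfl,rfl⟩|⟨rfl,rfl⟩|⟨rfl,rfl⟩|⟨rfl,rfl⟩|⟨rfl,rfl⟩|⟨rfl,rfl⟩ <;>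
    first
      | exact hxy' hij | exact hxa1 hij | exact hxa2 hij | exact hxb1 hij | exact hxb2 hij
      | exact hya1 hij | exact hya2 hij | exact hyb1 hij | exact hyb2 hij
      | exact ha12 hij | exact hab11 hij | exact hab12 hij | exact hab21 hij | exact hab22 hij
      | exact hb12 hij
      | exact hxy'.symm hij | exact hxa1.symm hij | exact hxa2.symm hij | exact hxb1.symm hij
      | exact hxb2.symm hij
      | exact hya1.symm hij | exact hya2.symm hij | exact hyb1.symm hij | exact hyb2.symm hij
      | exact ha12.symm hij | exact hab11.symm hij | exact hab12.symm hij | exact hab21.symm hij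
      | exact hab22.symm hij | exact hb12.symm hij
  · intro a b hab
    have hc : ∀ a b : Fin 6, doubleStar22.Adj a b →
        (a = 0 ∧ b = 1) ∨ (a = 1 ∧ b = 0) ∨ (a = 0 ∧ b = 2) ∨ (a = 2 ∧ b = 0) ∨
        (a = 0 ∧ b = 3) ∨ (a = 3 ∧ b = 0) ∨ (a = 1 ∧ b = 4) ∨ (a = 4 ∧ b = 1) ∨
        (a = 1 ∧ b = 5) ∨ (a = 5 ∧ b = 1) := by decide
    rcases hc a b hab with ⟨rfl,rfl⟩|⟨rfl,rfl⟩|⟨rfl,rfl⟩|⟨rfl,rfl⟩|⟨rfl,rfl⟩|⟨rfl,rfl⟩|⟨rfl,rfl⟩|⟨rfl,rfl⟩|⟨rfl,rfl⟩|⟨rfl,rfl⟩ <;>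
    first
      | exact hxy | exact hxy.symm | exact ha1 | exact ha1.symm | exact ha2 | exact ha2.symm
      | exact hb1 | exact hb1.symm | exact hb2 | exact hb2.symm


lemma select_four {α : Type*} [DecidableEq α] {A B : Finset α}
    (hA : 2 ≤ A.card) (hB : 2 ≤ B.card) (hAB : 4 ≤ (A ∪ B).card) :
    ∃ a1 a2 b1 b2, a1 ∈ A ∧ a2 ∈ A ∧ b1 ∈ B ∧ b2 ∈ B ∧ a1 ≠ a2 ∧ b1 ≠ b2 ∧
      a1 ≠ b1 ∧ a1 ≠ b2 ∧ a2 ≠ b1 ∧ a2 ≠ b2 := by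
  have hcard : (B \ A).card + A.card = (A ∪ B).card := by
    rw [Finset.union_comm]; exact Finset.card_sdiff_add_card B A
  rcases Nat.lt_or_ge (B \ A).card 2 with hlt | hge
  · -- |B \ A| ≤ 1, so |A| ≥ 3
    have hA3 : 3 ≤ A.card := by omega
    rcases Nat.eq_zero_or_pos (B \ A).card with h0 | hpos
    · -- B ⊆ A, |A| ≥ 4
      have hA4 : 4 ≤ A.card := by omega
      obtain ⟨b1, hb1, b2, hb2, hb12⟩ := Finset.one_lt_card.mp (by omega : 1 < B.card)
      have hA' : 2 ≤ (A \ {b1, b2}).card := by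
        have := Finset.card_sdiff_add_card A {b1, b2}
        have h2 : ({b1, b2} : Finset α).card ≤ 2 := Finset.card_insert_le _ _ |>.trans (by simp)
        have h3 : A.card ≤ (A ∪ ({b1, b2} : Finset α)).card :=
          Finset.card_le_card Finset.subset_union_left
        omega
      obtain ⟨a1, ha1, a2, ha2, ha12⟩ := Finset.one_lt_card.mp (by omega : 1 < (A \ {b1, b2}).card)
      have h1 := Finset.mem_sdiff.mp ha1
      have h2 := Finset.mem_sdiff.mp ha2
      simp only [Finset.mem_insert, Finset.mem_singleton, not_or] at h1 h2
      exact ⟨a1, a2, b1, b2, h1.1, h2.1, hb1, hb2, ha12, hb12,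
        h1.2.1, h1.2.2, h2.2.1, h2.2.2⟩
    · -- |B \ A| = 1
      obtain ⟨b1, hb1⟩ := Finset.card_pos.mp hpos
      have hb1' := Finset.mem_sdiff.mp hb1
      have hBA : 1 ≤ (B ∩ A).card := by
        have := Finset.card_sdiff_add_card_inter B A
        omega
      obtain ⟨b2, hb2⟩ := Finset.card_pos.mp hBA
      have hb2' := Finset.mem_inter.mp hb2
      have hb12 : b1 ≠ b2 := fun h => hb1'.2 (h ▸ hb2'.2)
      have hA' : 2 ≤ (A.erase b2).card := by
        rw [Finset.card_erase_of_mem hb2'.2]; omega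
      obtain ⟨a1, ha1, a2, ha2, ha12⟩ := Finset.one_lt_card.mp (by omega : 1 < (A.erase b2).card)
      have h1 := Finset.mem_erase.mp ha1
      have h2 := Finset.mem_erase.mp ha2
      have ha1b1 : a1 ≠ b1 := fun h => hb1'.2 (h ▸ h1.2)
      have ha2b1 : a2 ≠ b1 := fun h => hb1'.2 (h ▸ h2.2)
      exact ⟨a1, a2, b1, b2, h1.2, h2.2, hb1'.1, hb2'.1, ha12, hb12,
        ha1b1, h1.1, ha2b1, h2.1⟩
  · obtain ⟨b1, hb1, b2, hb2, hb12⟩ := Finset.one_lt_card.mp (by omega : 1 < (B \ A).card)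
    obtain ⟨a1, ha1, a2, ha2, ha12⟩ := Finset.one_lt_card.mp (by omega : 1 < A.card)
    have h1 := Finset.mem_sdiff.mp hb1
    have h2 := Finset.mem_sdiff.mp hb2
    exact ⟨a1, a2, b1, b2, ha1, ha2, h1.1, h2.1, ha12, hb12,
      fun h => h1.2 (h ▸ ha1), fun h => h2.2 (h ▸ ha1),
      fun h => h1.2 (h ▸ ha2), fun h => h2.2 (h ▸ ha2)⟩


section
variable {n : ℕ} (G : SimpleGraph (Fin n)) [DecidableRel G.Adj]

def clnb (x y : Fin n) : Finset (Fin n) :=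
  (G.neighborFinset x ∪ G.neighborFinset y) ∪ {x, y}

/-- closed neighborhood -/
def ncl (x : Fin n) : Finset (Fin n) := insert x (G.neighborFinset x)

lemma ncl_card (x : Fin n) : (ncl G x).card = G.degree x + 1 := by
  rw [ncl, Finset.card_insert_of_notMem (G.notMem_neighborFinset_self x),
    G.card_neighborFinset_eq_degree]

lemma ncl_subset_clnb_left (x y : Fin n) : ncl G x ⊆ clnb G x y := by
  intro v hv
  rcases Finset.mem_insert.mp hv with rfl | hv
  · exact Finset.mem_union_right _ (by simp)
  · exact Finset.mem_union_left _ (Finset.mem_union_left _ hv)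

lemma ncl_subset_clnb_right (x y : Fin n) : ncl G y ⊆ clnb G x y := by
  intro v hv
  rcases Finset.mem_insert.mp hv with rfl | hv
  · exact Finset.mem_union_right _ (by simp)
  · exact Finset.mem_union_left _ (Finset.mem_union_right _ hv)

lemma closed_all (hconn : G.Connected) {S : Finset (Fin n)} {v0 : Fin n} (h0 : v0 ∈ S)
    (hcl : ∀ a ∈ S, ∀ b, G.Adj a b → b ∈ S) : ∀ u, u ∈ S := by
  intro u
  suffices H : ∀ (a b : Fin n), G.Walk a b → a ∈ S → b ∈ S by
    obtain ⟨w⟩ := hconn v0 u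
    exact H _ _ w h0
  intro a b w
  induction w with
  | nil => exact id
  | cons h p ih => exact fun ha => ih (hcl _ ha _ h)

lemma closed_card (hconn : G.Connected) (hn : 6 ≤ n) {S : Finset (Fin n)} {v0 : Fin n}
    (h0 : v0 ∈ S) (hcl : ∀ a ∈ S, ∀ b, G.Adj a b → b ∈ S) (hS : S.card ≤ 5) : False := by
  have huniv : (Finset.univ : Finset (Fin n)) ⊆ S := fun u _ => closed_all G hconn h0 hcl u
  have := Finset.card_le_card huniv
  simp only [Finset.card_univ, Fintype.card_fin] at this
  omega

lemma dc (A B : Finset (Fin n)) :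
    ∑ a ∈ A, (G.neighborFinset a ∩ B).card = ∑ b ∈ B, (G.neighborFinset b ∩ A).card := by
  have h1 : ∀ (a : Fin n) (C : Finset (Fin n)),
      (G.neighborFinset a ∩ C).card = ∑ c ∈ C, if G.Adj a c then 1 else 0 := by
    intro a C
    rw [← Finset.card_filter]
    congr 1
    ext c
    simp [SimpleGraph.mem_neighborFinset, and_comm]
  simp_rw [h1]
  rw [Finset.sum_comm]
  apply Finset.sum_congr rfl
  intro b _
  apply Finset.sum_congr rfl
  intro a _
  by_cases h : G.Adj a b
  · rw [if_pos h, if_pos h.symm]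
  · rw [if_neg h, if_neg (fun h' => h h'.symm)]

lemma key {n : ℕ} (G : SimpleGraph (Fin n)) [DecidableRel G.Adj]
    (hfree : ¬ ContainsCopy doubleStar22 G) {x y : Fin n} (hxy : G.Adj x y)
    (hx : 3 ≤ G.degree x) (hy : 3 ≤ G.degree y) :
    (clnb G x y).card ≤ 5 := by
  by_contra hcon
  have h6 : 6 ≤ (clnb G x y).card := by omega
  set A := (G.neighborFinset x).erase y with hA
  set B := (G.neighborFinset y).erase x with hB
  have hyx : y ∈ G.neighborFinset x := by rwa [mem_neighborFinset]
  have hxyn : x ∈ G.neighborFinset y := by rwa [mem_neighborFinset, adj_comm]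
  have hAcard : 2 ≤ A.card := by
    rw [hA, Finset.card_erase_of_mem hyx, G.card_neighborFinset_eq_degree]; omega
  have hBcard : 2 ≤ B.card := by
    rw [hB, Finset.card_erase_of_mem hxyn, G.card_neighborFinset_eq_degree]; omega
  have hsub : clnb G x y ⊆ (A ∪ B) ∪ {x, y} := by
    intro v hv
    rcases Finset.mem_union.mp hv with hv1 | hv2
    · rcases Finset.mem_union.mp hv1 with hvx | hvy
      · by_cases hvyeq : v = y
        · exact Finset.mem_union_right _ (by simp [hvyeq])
        · exact Finset.mem_union_left _ (Finset.mem_union_left _ (Finset.mem_erase.mpr ⟨hvyeq, hvx⟩))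
      · by_cases hvxeq : v = x
        · exact Finset.mem_union_right _ (by simp [hvxeq])
        · exact Finset.mem_union_left _ (Finset.mem_union_right _ (Finset.mem_erase.mpr ⟨hvxeq, hvy⟩))
    · exact Finset.mem_union_right _ hv2
  have hABcard : 4 ≤ (A ∪ B).card := by
    have h1 : (clnb G x y).card ≤ (A ∪ B).card + ({x, y} : Finset (Fin n)).card :=
      (Finset.card_le_card hsub).trans (Finset.card_union_le _ _)
    have h2 : ({x, y} : Finset (Fin n)).card ≤ 2 :=
      (Finset.card_insert_le _ _).trans (by simp)
    omega
  obtain ⟨a1, a2, b1, b2, ha1, ha2, hb1, hb2, h12, h34, h13, h14, h23, h24⟩ :=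
    select_four hAcard hBcard hABcard
  have ha1' := Finset.mem_erase.mp ha1
  have ha2' := Finset.mem_erase.mp ha2
  have hb1' := Finset.mem_erase.mp hb1
  have hb2' := Finset.mem_erase.mp hb2
  exact hfree (embed_doubleStar G hxy
    ((mem_neighborFinset _ _ _).mp ha1'.2) ((mem_neighborFinset _ _ _).mp ha2'.2)
    ((mem_neighborFinset _ _ _).mp hb1'.2) ((mem_neighborFinset _ _ _).mp hb2'.2)
    h12 h34 ha1'.1 ha2'.1 hb1'.1 hb2'.1 h13 h14 h23 h24)


/-- If `x~y` is an edge with both degrees ≥ 3 and `deg x = 4` then `N[y] ⊆ N[x]`. -/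
lemma sub_of_deg4 (hfree : ¬ ContainsCopy doubleStar22 G) {x y : Fin n} (hxy : G.Adj x y) (hx : G.degree x = 4) (hy : 3 ≤ G.degree y) :
    G.neighborFinset y ⊆ ncl G x := by
  have h5 := key G hfree hxy (by omega) hy
  have hcl : clnb G x y = ncl G x := by
    refine (Finset.eq_of_subset_of_card_le (ncl_subset_clnb_left G x y) ?_).symm
    rw [ncl_card, hx]; omega
  intro v hv
  rw [← hcl]
  exact Finset.mem_union_left _ (Finset.mem_union_right _ hv)

/-- No edge between two degree-4 vertices. -/
lemma no_d4_edge (hconn : G.Connected) (hfree : ¬ ContainsCopy doubleStar22 G) (hn : 6 ≤ n) {x y : Fin n} (hxy : G.Adj x y) (hx : G.degree x = 4)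
    (hy : G.degree y = 4) : False := by
  have hsxy : G.neighborFinset y ⊆ ncl G x := sub_of_deg4 G hfree hxy hx (by omega)
  have hsyx : G.neighborFinset x ⊆ ncl G y := sub_of_deg4 G hfree hxy.symm hy (by omega)
  -- the two closed neighborhoods coincide
  have hxin : ncl G x ⊆ ncl G y := by
    intro v hv
    rcases Finset.mem_insert.mp hv with rfl | hv
    · exact Finset.mem_insert_of_mem ((mem_neighborFinset _ _ _).mpr hxy.symm)
    · exact hsyx hv
  have heq : ncl G x = ncl G y :=
    Finset.eq_of_subset_of_card_le hxin (by rw [ncl_card, ncl_card, hx, hy])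
  refine closed_card G hconn hn (S := ncl G x)
    (Finset.mem_insert_self x (G.neighborFinset x))
    ?_ (by rw [ncl_card, hx])
  intro a ha b hab
  rcases Finset.mem_insert.mp ha with rfl | ha
  · exact Finset.mem_insert_of_mem (by rwa [mem_neighborFinset])
  · -- a ∈ N(x); also a ∈ N(y) unless a = y
    by_cases hay : a = y
    · subst hay
      rw [heq]
      exact Finset.mem_insert_of_mem (by rwa [mem_neighborFinset])
    · have haNy : a ∈ G.neighborFinset y := by
        have : a ∈ ncl G y := heq ▸ Finset.mem_insert_of_mem ha
        exact (Finset.mem_insert.mp this).resolve_left hay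
      have hax : G.Adj a x := by rwa [mem_neighborFinset, adj_comm] at ha
      have hay' : G.Adj a y := by rwa [mem_neighborFinset, adj_comm] at haNy
      by_cases hdeg : 3 ≤ G.degree a
      · -- N[a] ⊆ clnb a x = ncl x
        have h5 := key G hfree hax hdeg (by omega)
        have hclx : ncl G x ⊆ clnb G a x := ncl_subset_clnb_right G a x
        have heq2 : clnb G a x = ncl G x :=
          (Finset.eq_of_subset_of_card_le hclx (by rw [ncl_card, hx]; omega)).symm
        have hb : b ∈ clnb G a x :=
          Finset.mem_union_left _ (Finset.mem_union_left _ ((mem_neighborFinset _ _ _).mpr hab))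
        rw [heq2] at hb
        exact hb
      · -- degree a ≤ 2, N(a) = {x, y}
        have hxyne : x ≠ y := G.ne_of_adj hxy
        have hsub2 : {x, y} ⊆ G.neighborFinset a := by
          intro v hv
          rcases Finset.mem_insert.mp hv with rfl | hv
          · rwa [mem_neighborFinset]
          · rw [Finset.mem_singleton] at hv; subst hv; rwa [mem_neighborFinset]
        have hcard2 : (G.neighborFinset a).card ≤ ({x, y} : Finset (Fin n)).card := by
          rw [Finset.card_insert_of_notMem (by simpa using hxyne), Finset.card_singleton,
            G.card_neighborFinset_eq_degree]
          omega
        have heq3 : ({x, y} : Finset (Fin n)) = G.neighborFinset a :=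
          Finset.eq_of_subset_of_card_le hsub2 hcard2
        have hb : b ∈ ({x, y} : Finset (Fin n)) := by
          rw [heq3, mem_neighborFinset]; exact hab
        rcases Finset.mem_insert.mp hb with rfl | hb
        · exact Finset.mem_insert_self _ _
        · rw [Finset.mem_singleton] at hb; subst hb
          exact Finset.mem_insert_of_mem (by rwa [mem_neighborFinset])

/-- the three neighbors of a degree-3 vertex -/
lemma nbrs3 {x u v w : Fin n} (h3 : G.degree x = 3) (h1 : G.Adj x u) (h2 : G.Adj x v)
    (h3' : G.Adj x w) (huv : u ≠ v) (huw : u ≠ w) (hvw : v ≠ w) :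
    ∀ c, G.Adj x c → c = u ∨ c = v ∨ c = w := by
  have hsub : {u, v, w} ⊆ G.neighborFinset x := by
    intro c hc
    simp only [Finset.mem_insert, Finset.mem_singleton] at hc
    rcases hc with rfl | rfl | rfl <;> rwa [mem_neighborFinset]
  have hcard : (G.neighborFinset x).card ≤ ({u, v, w} : Finset (Fin n)).card := by
    rw [Finset.card_insert_of_notMem (by simp [huv, huw]),
      Finset.card_insert_of_notMem (by simp [hvw]), Finset.card_singleton,
      G.card_neighborFinset_eq_degree, h3]
  have heq := Finset.eq_of_subset_of_card_le hsub hcard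
  intro c hc
  have : c ∈ ({u, v, w} : Finset (Fin n)) := heq ▸ (mem_neighborFinset _ _ _).mpr hc
  simpa using this

lemma third_nbr {a x y : Fin n} (h3 : G.degree a = 3) (h1 : G.Adj a x) (h2 : G.Adj a y)
    (hxy : x ≠ y) : ∃ t, G.Adj a t ∧ t ≠ x ∧ t ≠ y ∧
      ∀ c, G.Adj a c → c = x ∨ c = y ∨ c = t := by
  have hsub : {x, y} ⊆ G.neighborFinset a := by
    intro c hc
    simp only [Finset.mem_insert, Finset.mem_singleton] at hc
    rcases hc with rfl | rfl <;> rwa [mem_neighborFinset]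
  have hcard : (G.neighborFinset a \ {x, y}).card = 1 := by
    rw [Finset.card_sdiff_of_subset hsub, G.card_neighborFinset_eq_degree, h3,
      Finset.card_insert_of_notMem (by simpa using hxy), Finset.card_singleton]
  obtain ⟨t, ht⟩ := Finset.card_eq_one.mp hcard
  have htmem : t ∈ G.neighborFinset a \ {x, y} := ht ▸ Finset.mem_singleton_self t
  have ht1 := (Finset.mem_sdiff.mp htmem).1
  have ht2 := (Finset.mem_sdiff.mp htmem).2
  simp only [Finset.mem_insert, Finset.mem_singleton, not_or] at ht2
  refine ⟨t, (mem_neighborFinset _ _ _).mp ht1, ht2.1, ht2.2, ?_⟩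
  intro c hc
  by_cases hcx : c = x
  · exact Or.inl hcx
  by_cases hcy : c = y
  · exact Or.inr (Or.inl hcy)
  right; right
  have : c ∈ G.neighborFinset a \ {x, y} := by
    rw [Finset.mem_sdiff]
    exact ⟨(mem_neighborFinset _ _ _).mpr hc, by simp [hcx, hcy]⟩
  rw [ht] at this
  simpa using this

lemma common_nbr (hfree : ¬ ContainsCopy doubleStar22 G) {u v : Fin n} (hu : G.degree u = 3)
    (hv : G.degree v = 3) (huv : G.Adj u v) :
    ∃ c, G.Adj u c ∧ G.Adj v c ∧ c ≠ u ∧ c ≠ v := by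
  have h5 := key G hfree huv (by omega) (by omega)
  have hsub : clnb G u v ⊆ ncl G u ∪ ncl G v := by
    intro w hw
    rcases Finset.mem_union.mp hw with hw1 | hw2
    · rcases Finset.mem_union.mp hw1 with h | h
      · exact Finset.mem_union_left _ (Finset.mem_insert_of_mem h)
      · exact Finset.mem_union_right _ (Finset.mem_insert_of_mem h)
    · simp only [Finset.mem_insert, Finset.mem_singleton] at hw2
      rcases hw2 with rfl | rfl
      · exact Finset.mem_union_left _ (Finset.mem_insert_self _ _)
      · exact Finset.mem_union_right _ (Finset.mem_insert_self _ _)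
  have hsub2 : ncl G u ∪ ncl G v ⊆ clnb G u v :=
    Finset.union_subset (ncl_subset_clnb_left G u v) (ncl_subset_clnb_right G u v)
  have hucard : (ncl G u ∪ ncl G v).card ≤ 5 := le_trans (Finset.card_le_card hsub2) h5
  have hinter : 3 ≤ (ncl G u ∩ ncl G v).card := by
    have := Finset.card_union_add_card_inter (ncl G u) (ncl G v)
    rw [ncl_card, ncl_card, hu, hv] at this
    omega
  have hns : ¬ (ncl G u ∩ ncl G v ⊆ {u, v}) := by
    intro hsub3
    have := Finset.card_le_card hsub3
    have h2 : ({u, v} : Finset (Fin n)).card ≤ 2 :=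
      (Finset.card_insert_le _ _).trans (by simp)
    omega
  obtain ⟨c, hc, hc2⟩ := Finset.not_subset.mp hns
  simp only [Finset.mem_insert, Finset.mem_singleton, not_or] at hc2
  have hcu : c ∈ ncl G u := (Finset.mem_inter.mp hc).1
  have hcv : c ∈ ncl G v := (Finset.mem_inter.mp hc).2
  refine ⟨c, ?_, ?_, hc2.1, hc2.2⟩
  · exact (mem_neighborFinset _ _ _).mp ((Finset.mem_insert.mp hcu).resolve_left hc2.1)
  · exact (mem_neighborFinset _ _ _).mp ((Finset.mem_insert.mp hcv).resolve_left hc2.2)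

lemma cub (hconn : G.Connected) (hfree : ¬ ContainsCopy doubleStar22 G) (hn : 6 ≤ n)
    (hd : ∀ v, G.degree v = 3) {x y a b : Fin n}
    (hxy : G.Adj x y) (hxa : G.Adj x a) (hxb : G.Adj x b) (hya : G.Adj y a)
    (hyane : y ≠ a) (hybne : y ≠ b) (habne : a ≠ b) : False := by
  have nbrs3x := nbrs3 G (hd x) hxy hxa hxb hyane hybne habne
  have hclosure : ∀ (p q r s : Fin n),
      (∀ c, G.Adj p c → c = q ∨ c = r ∨ c = s) →
      (∀ c, G.Adj q c → c = p ∨ c = r ∨ c = s) →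
      (∀ c, G.Adj r c → c = p ∨ c = q ∨ c = s) →
      (∀ c, G.Adj s c → c = p ∨ c = q ∨ c = r) → False := by
    intro p q r s hp hq hr hs
    refine closed_card G hconn hn (S := {p, q, r, s}) (Finset.mem_insert_self _ _) ?_ ?_
    · intro v hv c hvc
      simp only [Finset.mem_insert, Finset.mem_singleton] at hv ⊢
      rcases hv with rfl | rfl | rfl | rfl
      · rcases hp c hvc with h | h | h <;> tauto
      · rcases hq c hvc with h | h | h <;> tauto
      · rcases hr c hvc with h | h | h <;> tauto
      · rcases hs c hvc with h | h | h <;> tauto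
    · calc ({p, q, r, s} : Finset (Fin n)).card
          ≤ ({q, r, s} : Finset (Fin n)).card + 1 := Finset.card_insert_le _ _
        _ ≤ (({r, s} : Finset (Fin n)).card + 1) + 1 := by
            have := Finset.card_insert_le q ({r, s} : Finset (Fin n))
            omega
        _ ≤ 5 := by
            have := Finset.card_insert_le r ({s} : Finset (Fin n))
            simp only [Finset.card_singleton] at this
            omega
  obtain ⟨c, hxc, hbc, hcx, hcb⟩ := common_nbr G hfree (hd x) (hd b) hxb
  have hxyne : x ≠ y := G.ne_of_adj hxy
  have hxane : x ≠ a := G.ne_of_adj hxa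
  have hxbne : x ≠ b := G.ne_of_adj hxb
  rcases nbrs3x c hxc with hcy | hca | hcb'
  · -- c = y : y ~ b
    have hyb : G.Adj y b := hcy ▸ hbc.symm
    have nbrs3y := nbrs3 G (hd y) hxy.symm hya hyb hxane hxbne habne
    obtain ⟨t, hat, htx, hty, nbrs3a⟩ := third_nbr G (hd a) hxa.symm hya.symm hxyne
    have htane : t ≠ a := fun h => G.irrefl (h ▸ hat)
    by_cases htb : t = b
    · have hab : G.Adj a b := htb ▸ hat
      have nbrs3b := nbrs3 G (hd b) hxb.symm hyb.symm hab.symm hxyne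
        hxane hyane
      refine hclosure x y a b nbrs3x
        (fun c hc => by rcases nbrs3y c hc with h|h|h <;> tauto)
        (fun c hc => by rcases nbrs3a c hc with h|h|h <;> (try rw [htb] at h) <;> tauto)
        (fun c hc => by rcases nbrs3b c hc with h|h|h <;> tauto)
    · obtain ⟨c', hac', htc', hc'a, hc't⟩ := common_nbr G hfree (hd a) (hd t) hat
      rcases nbrs3a c' hac' with h | h | h
      · -- c' = x, so x ~ t
        have hxt : G.Adj x t := (h ▸ htc').symm
        rcases nbrs3x t hxt with h' | h' | h'
        · exact hty h'
        · exact htane h'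
        · exact htb h'
      · -- c' = y
        have hyt : G.Adj y t := (h ▸ htc').symm
        rcases nbrs3y t hyt with h' | h' | h'
        · exact htx h'
        · exact htane h'
        · exact htb h'
      · exact hc't h
  · -- c = a : a ~ b
    have hab : G.Adj a b := hca ▸ hbc.symm
    have nbrs3a := nbrs3 G (hd a) hxa.symm hya.symm hab hxyne hxbne hybne
    obtain ⟨t, hyt, htx, hta, nbrs3y⟩ := third_nbr G (hd y) hxy.symm hya hxane
    have htyne : t ≠ y := fun h => G.irrefl (h ▸ hyt)
    by_cases htb : t = b
    · have hyb : G.Adj y b := htb ▸ hyt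
      have nbrs3b := nbrs3 G (hd b) hxb.symm hab.symm hyb.symm hxane hxyne hyane.symm
      refine hclosure x y a b nbrs3x
        (fun c hc => by rcases nbrs3y c hc with h|h|h <;> (try rw [htb] at h) <;> tauto)
        (fun c hc => by rcases nbrs3a c hc with h|h|h <;> tauto)
        (fun c hc => by rcases nbrs3b c hc with h|h|h <;> tauto)
    · obtain ⟨c', hyc', htc', hc'y, hc't⟩ := common_nbr G hfree (hd y) (hd t) hyt
      rcases nbrs3y c' hyc' with h | h | h
      · have hxt : G.Adj x t := (h ▸ htc').symm
        rcases nbrs3x t hxt with h' | h' | h'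
        · exact htyne h'
        · exact hta h'
        · exact htb h'
      · have hat : G.Adj a t := (h ▸ htc').symm
        rcases nbrs3a t hat with h' | h' | h'
        · exact htx h'
        · exact htyne h'
        · exact htb h'
      · exact hc't h
  · exact hcb hcb'

lemma min_deg_three (hconn : G.Connected) (hfree : ¬ ContainsCopy doubleStar22 G) (hn : 6 ≤ n)
    (hmin : ∀ v, 3 ≤ G.degree v) : False := by
  by_cases h5 : ∃ x, 5 ≤ G.degree x
  · obtain ⟨x, hx⟩ := h5
    have hne : (G.neighborFinset x).Nonempty := by
      rw [← Finset.card_pos, G.card_neighborFinset_eq_degree]; omega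
    obtain ⟨u, hu⟩ := hne
    have hxu : G.Adj x u := (mem_neighborFinset _ _ _).mp hu
    have hk := key G hfree hxu (by omega) (hmin u)
    have := Finset.card_le_card (ncl_subset_clnb_left G x u)
    rw [ncl_card] at this
    omega
  · push_neg at h5
    by_cases h4 : ∃ x, G.degree x = 4
    · obtain ⟨x, hx⟩ := h4
      refine closed_card G hconn hn (S := ncl G x) (Finset.mem_insert_self _ _) ?_
        (by rw [ncl_card, hx])
      intro a ha c hac
      rcases Finset.mem_insert.mp ha with rfl | ha
      · exact Finset.mem_insert_of_mem ((mem_neighborFinset _ _ _).mpr hac)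
      · have hxa : G.Adj x a := (mem_neighborFinset _ _ _).mp ha
        have hda : G.degree a = 3 := by
          have h1 := hmin a
          have h2 : G.degree a < 5 := h5 a
          rcases Nat.lt_or_ge (G.degree a) 4 with h | h
          · omega
          · exfalso
            have h44 : G.degree a = 4 := by omega
            exact no_d4_edge G hconn hfree hn hxa hx h44
        have hsub := sub_of_deg4 G hfree hxa hx (by omega)
        exact hsub ((mem_neighborFinset _ _ _).mpr hac)
    · push_neg at h4
      have hd : ∀ v, G.degree v = 3 := by
        intro v
        have := hmin v
        have := h5 v
        have := h4 v
        omega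
      have hx0 : (0 : ℕ) < n := by omega
      set x : Fin n := ⟨0, hx0⟩ with hxdef
      have hcard3 : (G.neighborFinset x).card = 3 := by
        rw [G.card_neighborFinset_eq_degree, hd]
      obtain ⟨y, a, b, hyab, hyb2, hab2, hset⟩ := Finset.card_eq_three.mp hcard3
      have hxy : G.Adj x y := by
        rw [← mem_neighborFinset, hset]; simp
      have hxa : G.Adj x a := by
        rw [← mem_neighborFinset, hset]; simp
      have hxb : G.Adj x b := by
        rw [← mem_neighborFinset, hset]; simp
      obtain ⟨c, hxc, hyc, hcx, hcy⟩ := common_nbr G hfree (hd x) (hd y) hxy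
      have hcmem : c = y ∨ c = a ∨ c = b := by
        have : c ∈ G.neighborFinset x := (mem_neighborFinset _ _ _).mpr hxc
        rw [hset] at this
        simpa using this
      rcases hcmem with h | h | h
      · exact hcy h
      · -- c = a : y ~ a
        have hya : G.Adj y a := h ▸ hyc
        exact cub G hconn hfree hn hd hxy hxa hxb hya hyab hyb2 hab2
      · -- c = b : y ~ b
        have hyb : G.Adj y b := h ▸ hyc
        exact cub G hconn hfree hn hd hxy hxb hxa hyb hyb2 hyab (Ne.symm hab2)

lemma upper (hn : 6 ≤ n) (hconn : G.Connected) (hfree : ¬ ContainsCopy doubleStar22 G) :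
    G.edgeFinset.card ≤ 2 * n - 4 := by
  by_contra hcon
  have hsum : ∑ v, G.degree v = 2 * G.edgeFinset.card := G.sum_degrees_eq_twice_card_edges
  have hsum6 : 4 * n ≤ (∑ v, G.degree v) + 6 := by omega
  clear hcon hsum
  set W := Finset.univ.filter (fun v => G.degree v ≤ 2) with hWdef
  set D3 := Finset.univ.filter (fun v => G.degree v = 3) with hD3def
  set D4 := Finset.univ.filter (fun v => G.degree v = 4) with hD4def
  set H := Finset.univ.filter (fun v => 5 ≤ G.degree v) with hHdef
  have hdisj1 : Disjoint W (D3 ∪ (D4 ∪ H)) := by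
    rw [Finset.disjoint_left]
    intro a ha hb
    simp only [hWdef, hD3def, hD4def, hHdef, Finset.mem_filter, Finset.mem_union,
      Finset.mem_univ, true_and] at ha hb
    omega
  have hdisj2 : Disjoint D3 (D4 ∪ H) := by
    rw [Finset.disjoint_left]
    intro a ha hb
    simp only [hD3def, hD4def, hHdef, Finset.mem_filter, Finset.mem_union,
      Finset.mem_univ, true_and] at ha hb
    omega
  have hdisj3 : Disjoint D4 H := by
    rw [Finset.disjoint_left]
    intro a ha hb
    simp only [hD4def, hHdef, Finset.mem_filter, Finset.mem_univ, true_and] at ha hb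
    omega
  have huniv : W ∪ (D3 ∪ (D4 ∪ H)) = Finset.univ := by
    ext v
    simp only [hWdef, hD3def, hD4def, hHdef, Finset.mem_filter, Finset.mem_union,
      Finset.mem_univ, true_and, iff_true]
    omega
  have hpart : ∀ f : Fin n → ℕ, ∑ v, f v =
      ∑ v ∈ W, f v + (∑ v ∈ D3, f v + (∑ v ∈ D4, f v + ∑ v ∈ H, f v)) := by
    intro f
    rw [← huniv, Finset.sum_union hdisj1, Finset.sum_union hdisj2, Finset.sum_union hdisj3]
  have hcards : n = W.card + (D3.card + (D4.card + H.card)) := by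
    have h := hpart (fun _ => 1)
    simp only [Finset.sum_const, smul_eq_mul, mul_one, Finset.card_univ,
      Fintype.card_fin] at h
    exact h
  have hsplit := hpart (fun v => G.degree v)
  have hD3sum : ∑ v ∈ D3, G.degree v = 3 * D3.card := by
    rw [Finset.sum_congr rfl (fun v hv => (Finset.mem_filter.mp hv).2), Finset.sum_const,
      smul_eq_mul, mul_comm]
  have hD4sum : ∑ v ∈ D4, G.degree v = 4 * D4.card := by
    rw [Finset.sum_congr rfl (fun v hv => (Finset.mem_filter.mp hv).2), Finset.sum_const,
      smul_eq_mul, mul_comm]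
  have hWsum_le : ∑ v ∈ W, G.degree v ≤ 2 * W.card := by
    rw [mul_comm]
    exact Finset.sum_le_card_nsmul W _ 2 (fun v hv => (Finset.mem_filter.mp hv).2)
  -- now case on H
  by_cases hHne : H.Nonempty
  · obtain ⟨c, hc⟩ := hHne
    have hc5 : 5 ≤ G.degree c := (Finset.mem_filter.mp hc).2
    have hP1 : ∀ v, 5 ≤ G.degree v → ∀ u, G.Adj v u → G.degree u ≤ 2 := by
      intro v hv u hadj
      by_contra hu
      have hk := key G hfree hadj (by omega) (by omega)
      have := Finset.card_le_card (ncl_subset_clnb_left G v u)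
      rw [ncl_card] at this
      omega
    have hHnbrW : ∀ v ∈ H, G.neighborFinset v ∩ W = G.neighborFinset v := by
      intro v hv
      apply Finset.inter_eq_left.mpr
      intro u hu
      simp only [hWdef, Finset.mem_filter, Finset.mem_univ, true_and]
      exact hP1 v (Finset.mem_filter.mp hv).2 u ((mem_neighborFinset _ _ _).mp hu)
    have hHsum : ∑ v ∈ H, G.degree v ≤ ∑ w ∈ W, G.degree w := by
      calc ∑ v ∈ H, G.degree v = ∑ v ∈ H, (G.neighborFinset v ∩ W).card := by
            apply Finset.sum_congr rfl
            intro v hv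
            rw [hHnbrW v hv, G.card_neighborFinset_eq_degree]
        _ = ∑ w ∈ W, (G.neighborFinset w ∩ H).card := dc G H W
        _ ≤ ∑ w ∈ W, G.degree w := by
            apply Finset.sum_le_sum
            intro w _
            rw [← G.card_neighborFinset_eq_degree]
            exact Finset.card_le_card Finset.inter_subset_left
    by_cases hH2 : 2 ≤ H.card
    · omega
    · -- H = {c}
      have hH1 : H.card = 1 := by
        have : 1 ≤ H.card := Finset.card_pos.mpr ⟨c, hc⟩
        omega
      obtain ⟨c', hc'⟩ := Finset.card_eq_one.mp hH1
      have hcc : c = c' := by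
        have := hc
        rw [hc'] at this
        simpa using this
      subst hcc
      have hHsum_eq : ∑ v ∈ H, G.degree v = G.degree c := by rw [hc', Finset.sum_singleton]
      have hdcW : G.degree c ≤ W.card := by
        rw [← G.card_neighborFinset_eq_degree, ← hHnbrW c hc]
        exact Finset.card_le_card Finset.inter_subset_right
      omega
  · -- H empty
    have hH0 : H = ∅ := Finset.not_nonempty_iff_eq_empty.mp hHne
    have hHsum0 : ∑ v ∈ H, G.degree v = 0 := by rw [hH0]; simp
    have hHcard0 : H.card = 0 := by rw [hH0]; simp
    have hle4 : ∀ v, G.degree v ≤ 4 := by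
      intro v
      by_contra hv
      have : v ∈ H := by
        simp only [hHdef, Finset.mem_filter, Finset.mem_univ, true_and]
        omega
      rw [hH0] at this
      simp at this
    have hstar : 4 * W.card + D3.card ≤ 6 + ∑ v ∈ W, G.degree v := by omega
    have hstar2 : 2 * W.card + D3.card ≤ 6 := by omega
    by_cases hWne : W.Nonempty
    case neg =>
      refine min_deg_three G hconn hfree hn ?_
      intro v
      by_contra hv
      exact hWne ⟨v, by simp only [hWdef, Finset.mem_filter, Finset.mem_univ, true_and]; omega⟩
    case pos =>
    have hnbr34 : ∀ v, G.degree v = 4 → ∀ u, G.Adj v u → G.degree u ≤ 2 ∨ G.degree u = 3 := by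
      intro v hv u hadj
      have h4 := hle4 u
      by_cases hu4 : G.degree u = 4
      · exact absurd (no_d4_edge G hconn hfree hn hadj hv hu4) id
      · omega
    have hWcard : 1 ≤ W.card := Finset.card_pos.mpr hWne
    have hW3 : W.card ≤ 3 := by omega
    -- case |W| = 3
    rcases (by omega : W.card = 3 ∨ W.card = 1 ∨ W.card = 2) with hW | hW
    · -- |W| = 3, D3 = ∅
      have hD30 : D3 = ∅ := Finset.card_eq_zero.mp (by omega)
      have hD4nbrW : ∀ v ∈ D4, G.neighborFinset v ∩ W = G.neighborFinset v := by
        intro v hv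
        apply Finset.inter_eq_left.mpr
        intro u hu
        have := hnbr34 v (Finset.mem_filter.mp hv).2 u ((mem_neighborFinset _ _ _).mp hu)
        rcases this with h | h
        · simp only [hWdef, Finset.mem_filter, Finset.mem_univ, true_and]; exact h
        · exfalso
          have : u ∈ D3 := by
            simp only [hD3def, Finset.mem_filter, Finset.mem_univ, true_and]; exact h
          rw [hD30] at this; simp at this
      have hsum4 : 4 * D4.card ≤ ∑ w ∈ W, G.degree w := by
        calc 4 * D4.card = ∑ v ∈ D4, G.degree v := hD4sum.symm
          _ = ∑ v ∈ D4, (G.neighborFinset v ∩ W).card := by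
              apply Finset.sum_congr rfl
              intro v hv
              rw [hD4nbrW v hv, G.card_neighborFinset_eq_degree]
          _ = ∑ w ∈ W, (G.neighborFinset w ∩ D4).card := dc G D4 W
          _ ≤ ∑ w ∈ W, G.degree w := by
              apply Finset.sum_le_sum
              intro w _
              rw [← G.card_neighborFinset_eq_degree]
              exact Finset.card_le_card Finset.inter_subset_left
      omega
    · -- |W| = 1 or 2 : first D4 nonempty
      have hD4ne : D4.Nonempty := by
        rw [← Finset.card_pos]
        by_contra hD4
        omega
      obtain ⟨x, hx⟩ := hD4ne
      have hdx : G.degree x = 4 := (Finset.mem_filter.mp hx).2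
      have hNxsub : G.neighborFinset x ⊆ W ∪ D3 := by
        intro u hu
        rcases hnbr34 x hdx u ((mem_neighborFinset _ _ _).mp hu) with h | h
        · exact Finset.mem_union_left _ (by simp only [hWdef, Finset.mem_filter, Finset.mem_univ, true_and]; exact h)
        · exact Finset.mem_union_right _ (by simp only [hD3def, Finset.mem_filter, Finset.mem_univ, true_and]; exact h)
      have hNclcard : (ncl G x).card = 5 := by rw [ncl_card, hdx]
      have hex : ∃ v, v ∉ ncl G x := by
        by_contra hno
        push_neg at hno
        have hsub : (Finset.univ : Finset (Fin n)) ⊆ ncl G x := fun v _ => hno v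
        have := Finset.card_le_card hsub
        rw [hNclcard, Finset.card_univ, Fintype.card_fin] at this
        omega
      have hNx4 : (G.neighborFinset x).card = 4 := by
        rw [G.card_neighborFinset_eq_degree, hdx]
      have hNsplit : ∀ v, G.degree v = 4 →
          4 ≤ (G.neighborFinset v ∩ W).card + (G.neighborFinset v ∩ D3).card := by
        intro v hv
        have hsubv : G.neighborFinset v ⊆ W ∪ D3 := by
          intro u hu
          rcases hnbr34 v hv u ((mem_neighborFinset _ _ _).mp hu) with h | h
          · exact Finset.mem_union_left _
              (by simp only [hWdef, Finset.mem_filter, Finset.mem_univ, true_and]; exact h)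
          · exact Finset.mem_union_right _
              (by simp only [hD3def, Finset.mem_filter, Finset.mem_univ, true_and]; exact h)
        have h1 : G.neighborFinset v =
            (G.neighborFinset v ∩ W) ∪ (G.neighborFinset v ∩ D3) := by
          rw [← Finset.inter_union_distrib_left]
          exact (Finset.inter_eq_left.mpr hsubv).symm
        calc (4 : ℕ) = (G.neighborFinset v).card := by
              rw [G.card_neighborFinset_eq_degree, hv]
          _ = ((G.neighborFinset v ∩ W) ∪ (G.neighborFinset v ∩ D3)).card := by rw [← h1]
          _ ≤ _ := Finset.card_union_le _ _
      rcases hW with hW1 | hW2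
      · -- |W| = 1
        obtain ⟨w, hweq⟩ := Finset.card_eq_one.mp hW1
        have hwW : w ∈ W := hweq ▸ Finset.mem_singleton_self w
        have hdw : G.degree w ≤ 2 := (Finset.mem_filter.mp hwW).2
        have hWsum_eq : ∑ v ∈ W, G.degree v = G.degree w := by
          rw [hweq, Finset.sum_singleton]
        have hD3card : D3.card ≤ 2 + G.degree w := by omega
        have hmemW : ∀ v, G.degree v ≤ 2 → v = w := by
          intro v hv
          have : v ∈ W := by
            simp only [hWdef, Finset.mem_filter, Finset.mem_univ, true_and]; exact hv
          rw [hweq] at this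
          simpa using this
        by_cases hwx : w ∈ G.neighborFinset x
        · set P := (G.neighborFinset x).erase w with hPdef
          have hPcard : P.card = 3 := by
            rw [hPdef, Finset.card_erase_of_mem hwx, hNx4]
          have hPD3 : ∀ p ∈ P, G.degree p = 3 ∧ G.Adj x p := by
            intro p hp
            obtain ⟨hpw, hpx⟩ := Finset.mem_erase.mp hp
            have hadj : G.Adj x p := (mem_neighborFinset _ _ _).mp hpx
            rcases hnbr34 x hdx p hadj with h | h
            · exact absurd (hmemW p h) hpw
            · exact ⟨h, hadj⟩
          have hPncl : ∀ p ∈ P, G.neighborFinset p ⊆ ncl G x := by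
            intro p hp
            exact sub_of_deg4 G hfree (hPD3 p hp).2 hdx (by have := (hPD3 p hp).1; omega)
          by_cases hpw : ∃ p ∈ P, G.Adj p w
          · obtain ⟨p0, hp0P, hp0w⟩ := hpw
            have hp0x : p0 ∈ G.neighborFinset x := (Finset.mem_erase.mp hp0P).2
            refine closed_card G hconn hn (S := ncl G x) (Finset.mem_insert_self _ _) ?_
              (by rw [hNclcard])
            intro a ha b hab
            rcases Finset.mem_insert.mp ha with rfl | ha
            · exact Finset.mem_insert_of_mem ((mem_neighborFinset _ _ _).mpr hab)
            · by_cases haw : a = w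
              · subst haw
                have hxp0 : x ≠ p0 := by
                  intro h
                  exact G.notMem_neighborFinset_self x (h ▸ hp0x)
                have hsub2 : {x, p0} ⊆ G.neighborFinset a := by
                  intro u hu
                  simp only [Finset.mem_insert, Finset.mem_singleton] at hu
                  rcases hu with rfl | rfl
                  · exact (mem_neighborFinset _ _ _).mpr ((mem_neighborFinset _ _ _).mp hwx).symm
                  · exact (mem_neighborFinset _ _ _).mpr hp0w.symm
                have hcard2 : (G.neighborFinset a).card ≤ ({x, p0} : Finset (Fin n)).card := by
                  rw [Finset.card_insert_of_notMem (by simpa using hxp0),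
                    Finset.card_singleton, G.card_neighborFinset_eq_degree]
                  omega
                have heq2 := Finset.eq_of_subset_of_card_le hsub2 hcard2
                have hb : b ∈ ({x, p0} : Finset (Fin n)) := by
                  rw [heq2]; exact (mem_neighborFinset _ _ _).mpr hab
                simp only [Finset.mem_insert, Finset.mem_singleton] at hb
                rcases hb with rfl | rfl
                · exact Finset.mem_insert_self _ _
                · exact Finset.mem_insert_of_mem hp0x
              · have haP : a ∈ P := Finset.mem_erase.mpr ⟨haw, ha⟩
                exact hPncl a haP ((mem_neighborFinset _ _ _).mpr hab)
          · push_neg at hpw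
            have hNxeq : insert w P = G.neighborFinset x := Finset.insert_erase hwx
            have hwP : w ∉ P := fun h => (Finset.mem_erase.mp h).1 rfl
            have hxNx : x ∉ G.neighborFinset x := G.notMem_neighborFinset_self x
            have hPclosed : ∀ p ∈ P, G.neighborFinset p ⊆ insert x P := by
              intro p hp b hb
              have hb1 : b ∈ ncl G x := hPncl p hp hb
              have hbp : G.Adj p b := (mem_neighborFinset _ _ _).mp hb
              rcases Finset.mem_insert.mp hb1 with rfl | hb2
              · exact Finset.mem_insert_self _ _
              · rw [← hNxeq] at hb2
                rcases Finset.mem_insert.mp hb2 with rfl | hb3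
                · exact absurd hbp (hpw p hp)
                · exact Finset.mem_insert_of_mem hb3
            set R := Finset.univ \ ncl G x with hRdef
            have hRcard : 1 ≤ R.card := by
              rw [hRdef, Finset.card_sdiff_of_subset (Finset.subset_univ _), hNclcard,
                Finset.card_univ, Fintype.card_fin]
              omega
            have hRx : ∀ v ∈ R, v ∉ ncl G x := fun v hv => (Finset.mem_sdiff.mp hv).2
            have hwncl : w ∈ ncl G x := Finset.mem_insert_of_mem hwx
            have hRdeg : ∀ v ∈ R, 3 ≤ G.degree v := by
              intro v hv
              by_contra hlt
              have hvw : v = w := hmemW v (by omega)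
              exact hRx v hv (hvw ▸ hwncl)
            have hdegsplit : ∀ v, G.degree v =
                (G.neighborFinset v ∩ ncl G x).card + (G.neighborFinset v ∩ R).card := by
              intro v
              have hNR : G.neighborFinset v ∩ R = G.neighborFinset v \ ncl G x := by
                rw [hRdef]
                ext u
                simp only [Finset.mem_inter, Finset.mem_sdiff, Finset.mem_univ, true_and]
                try tauto
              rw [hNR, ← G.card_neighborFinset_eq_degree]
              exact (Finset.card_inter_add_card_sdiff _ _).symm
            have hbound : ∑ v ∈ R, (G.neighborFinset v ∩ ncl G x).card ≤ 1 := by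
              rw [dc G R (ncl G x)]
              have hncl2 : ncl G x = insert x (insert w P) := by rw [ncl, ← hNxeq]
              have hxwp : x ∉ insert w P := by rw [hNxeq]; exact hxNx
              rw [hncl2, Finset.sum_insert hxwp, Finset.sum_insert hwP]
              have hx0 : (G.neighborFinset x ∩ R).card = 0 := by
                rw [Finset.card_eq_zero, Finset.eq_empty_iff_forall_notMem]
                intro u hu
                obtain ⟨hu1, hu2⟩ := Finset.mem_inter.mp hu
                exact hRx u hu2 (Finset.mem_insert_of_mem hu1)
              have hp0 : ∑ p ∈ P, (G.neighborFinset p ∩ R).card = 0 := by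
                apply Finset.sum_eq_zero
                intro p hp
                rw [Finset.card_eq_zero, Finset.eq_empty_iff_forall_notMem]
                intro u hu
                obtain ⟨hu1, hu2⟩ := Finset.mem_inter.mp hu
                have : u ∈ insert x P := hPclosed p hp hu1
                rcases Finset.mem_insert.mp this with rfl | h3
                · exact hRx u hu2 (Finset.mem_insert_self _ _)
                · exact hRx u hu2 (Finset.mem_insert_of_mem (hNxeq ▸ Finset.mem_insert_of_mem h3))
              have hw1 : (G.neighborFinset w ∩ R).card ≤ 1 := by
                have hxw : x ∈ G.neighborFinset w :=
                  (mem_neighborFinset _ _ _).mpr ((mem_neighborFinset _ _ _).mp hwx).symm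
                have hsubw : G.neighborFinset w ∩ R ⊆ (G.neighborFinset w).erase x := by
                  intro u hu
                  obtain ⟨hu1, hu2⟩ := Finset.mem_inter.mp hu
                  refine Finset.mem_erase.mpr ⟨?_, hu1⟩
                  intro h
                  exact hRx u hu2 (h ▸ Finset.mem_insert_self _ _)
                have := Finset.card_le_card hsubw
                rw [Finset.card_erase_of_mem hxw, G.card_neighborFinset_eq_degree] at this
                omega
              omega
            have hRD3 : (R ∩ D3).card ≤ 1 := by
              have hPD3' : P ⊆ D3 := fun p hp =>
                Finset.mem_filter.mpr ⟨Finset.mem_univ _, (hPD3 p hp).1⟩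
              have hdisjPR : Disjoint P (R ∩ D3) := by
                rw [Finset.disjoint_left]
                intro p hp hpR
                have hpN : p ∈ G.neighborFinset x := (Finset.mem_erase.mp hp).2
                exact hRx p (Finset.mem_inter.mp hpR).1 (Finset.mem_insert_of_mem hpN)
              have hun : P ∪ (R ∩ D3) ⊆ D3 :=
                Finset.union_subset hPD3' Finset.inter_subset_right
              have hcard3 := Finset.card_le_card hun
              rw [Finset.card_union_of_disjoint hdisjPR] at hcard3
              omega
            have hsumlow : 3 * R.card ≤ ∑ v ∈ R, G.degree v := by
              rw [mul_comm]
              exact Finset.card_nsmul_le_sum R _ 3 hRdeg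
            have hsplitR : ∑ v ∈ R, G.degree v =
                ∑ v ∈ R, (G.neighborFinset v ∩ ncl G x).card +
                ∑ v ∈ R, (G.neighborFinset v ∩ R).card := by
              rw [← Finset.sum_add_distrib]
              exact Finset.sum_congr rfl (fun v _ => hdegsplit v)
            have hinner : ∑ v ∈ R, (G.neighborFinset v ∩ R).card ≤ R.card + 3 := by
              have hsplit2 : ∑ v ∈ R ∩ D3, (G.neighborFinset v ∩ R).card +
                  ∑ v ∈ R \ D3, (G.neighborFinset v ∩ R).card =
                  ∑ v ∈ R, (G.neighborFinset v ∩ R).card :=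
                Finset.sum_inter_add_sum_sdiff R D3 _
              have h1 : ∑ v ∈ R ∩ D3, (G.neighborFinset v ∩ R).card ≤ 3 := by
                calc ∑ v ∈ R ∩ D3, (G.neighborFinset v ∩ R).card
                    ≤ ∑ v ∈ R ∩ D3, 3 := by
                      apply Finset.sum_le_sum
                      intro v hv
                      have hv3 : G.degree v = 3 :=
                        (Finset.mem_filter.mp (Finset.mem_inter.mp hv).2).2
                      calc (G.neighborFinset v ∩ R).card
                          ≤ (G.neighborFinset v).card := Finset.card_le_card Finset.inter_subset_left
                        _ = 3 := by rw [G.card_neighborFinset_eq_degree, hv3]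
                  _ = 3 * (R ∩ D3).card := by rw [Finset.sum_const, smul_eq_mul, mul_comm]
                  _ ≤ 3 := by omega
              have h2 : ∑ v ∈ R \ D3, (G.neighborFinset v ∩ R).card ≤ R.card := by
                calc ∑ v ∈ R \ D3, (G.neighborFinset v ∩ R).card
                    ≤ ∑ v ∈ R \ D3, 1 := by
                      apply Finset.sum_le_sum
                      intro v hv
                      obtain ⟨hvR, hvD3⟩ := Finset.mem_sdiff.mp hv
                      have hdv : G.degree v = 4 := by
                        have h3 := hRdeg v hvR
                        have h4 := hle4 v
                        have h5 : G.degree v ≠ 3 := by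
                          intro h
                          exact hvD3 (Finset.mem_filter.mpr ⟨Finset.mem_univ _, h⟩)
                        omega
                      have hsub3 : G.neighborFinset v ∩ R ⊆ R ∩ D3 := by
                        intro u hu
                        obtain ⟨hu1, hu2⟩ := Finset.mem_inter.mp hu
                        refine Finset.mem_inter.mpr ⟨hu2, ?_⟩
                        rcases hnbr34 v hdv u ((mem_neighborFinset _ _ _).mp hu1) with h | h
                        · exfalso
                          exact hRx u hu2 ((hmemW u h) ▸ hwncl)
                        · exact Finset.mem_filter.mpr ⟨Finset.mem_univ _, h⟩
                      have := Finset.card_le_card hsub3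
                      omega
                  _ = (R \ D3).card := by rw [Finset.sum_const, smul_eq_mul, mul_one]
                  _ ≤ R.card := Finset.card_le_card (Finset.sdiff_subset)
              omega
            have hR2 : R.card ≤ 2 := by omega
            have hinner2 : ∑ v ∈ R, (G.neighborFinset v ∩ R).card ≤ R.card * (R.card - 1) := by
              calc ∑ v ∈ R, (G.neighborFinset v ∩ R).card
                  ≤ ∑ v ∈ R, (R.card - 1) := by
                    apply Finset.sum_le_sum
                    intro v hv
                    have hsub4 : G.neighborFinset v ∩ R ⊆ R.erase v := by
                      intro u hu
                      obtain ⟨hu1, hu2⟩ := Finset.mem_inter.mp hu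
                      refine Finset.mem_erase.mpr ⟨?_, hu2⟩
                      intro h
                      exact G.notMem_neighborFinset_self v (h ▸ hu1)
                    have := Finset.card_le_card hsub4
                    rw [Finset.card_erase_of_mem hv] at this
                    exact this
                _ = R.card * (R.card - 1) := by rw [Finset.sum_const, smul_eq_mul]
            have : 3 * R.card ≤ R.card * (R.card - 1) + 1 := by omega
            rcases (by omega : R.card = 1 ∨ R.card = 2) with h | h <;> rw [h] at this <;> omega
        · -- w ∉ N x : ncl x closed
          refine closed_card G hconn hn (S := ncl G x) (Finset.mem_insert_self _ _) ?_
            (by rw [hNclcard])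
          intro a ha b hab
          rcases Finset.mem_insert.mp ha with rfl | ha
          · exact Finset.mem_insert_of_mem ((mem_neighborFinset _ _ _).mpr hab)
          · have hadj : G.Adj x a := (mem_neighborFinset _ _ _).mp ha
            have hda : G.degree a = 3 := by
              rcases hnbr34 x hdx a hadj with h | h
              · exact absurd (hmemW a h ▸ ha) hwx
              · exact h
            exact sub_of_deg4 G hfree hadj hdx (by omega) ((mem_neighborFinset _ _ _).mpr hab)
      · -- |W| = 2
        have hD3le2 : D3.card ≤ 2 := by omega
        have hinterW : (G.neighborFinset x ∩ W).card ≤ 2 := by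
          have := Finset.card_le_card
            (Finset.inter_subset_right : G.neighborFinset x ∩ W ⊆ W)
          omega
        have hinterD3 : (G.neighborFinset x ∩ D3).card ≤ D3.card :=
          Finset.card_le_card Finset.inter_subset_right
        have hx4 := hNsplit x hdx
        have hD3eq : G.neighborFinset x ∩ D3 = D3 :=
          Finset.eq_of_subset_of_card_le Finset.inter_subset_right (by omega)
        have hWeq : G.neighborFinset x ∩ W = W :=
          Finset.eq_of_subset_of_card_le Finset.inter_subset_right (by omega)
        have hWsub : W ⊆ G.neighborFinset x := hWeq ▸ Finset.inter_subset_left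
        have hD3sub : D3 ⊆ G.neighborFinset x := hD3eq ▸ Finset.inter_subset_left
        obtain ⟨v, hv⟩ := hex
        have hvnx : v ∉ G.neighborFinset x := fun h => hv (Finset.mem_insert_of_mem h)
        have hdv : G.degree v = 4 := by
          have h1 : ¬ G.degree v ≤ 2 := fun h =>
            hvnx (hWsub (Finset.mem_filter.mpr ⟨Finset.mem_univ _, h⟩))
          have h2 : G.degree v ≠ 3 := fun h =>
            hvnx (hD3sub (Finset.mem_filter.mpr ⟨Finset.mem_univ _, h⟩))
          have := hle4 v
          omega
        have hv4 := hNsplit v hdv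
        have hinterWv : (G.neighborFinset v ∩ W).card ≤ 2 := by
          have := Finset.card_le_card
            (Finset.inter_subset_right : G.neighborFinset v ∩ W ⊆ W)
          omega
        have hpD3 : 1 ≤ (G.neighborFinset v ∩ D3).card := by omega
        obtain ⟨p, hp⟩ := Finset.card_pos.mp
          (show 0 < (G.neighborFinset v ∩ D3).card by omega)
        obtain ⟨hp1, hp2⟩ := Finset.mem_inter.mp hp
        have hdp : G.degree p = 3 := (Finset.mem_filter.mp hp2).2
        have hxp : G.Adj x p := (mem_neighborFinset _ _ _).mp (hD3sub hp2)
        have hNp := sub_of_deg4 G hfree hxp hdx (by omega)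
        exact hv (hNp ((mem_neighborFinset _ _ _).mpr ((mem_neighborFinset _ _ _).mp hp1).symm))

end

/-- The complete bipartite graph K_{2,n-2}. -/
def lowerGraph (n : ℕ) : SimpleGraph (Fin n) where
  Adj u v := (u.val < 2 ∧ 2 ≤ v.val) ∨ (v.val < 2 ∧ 2 ≤ u.val)
  symm := by constructor; intro u v h; tauto
  loopless := by constructor; intro u h; rcases h with ⟨h1, h2⟩ | ⟨h1, h2⟩ <;> omega

instance (n : ℕ) : DecidableRel (lowerGraph n).Adj := fun _ _ =>
  inferInstanceAs (Decidable (_ ∨ _))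

lemma lg_adj {n : ℕ} (u v : Fin n) :
    (lowerGraph n).Adj u v ↔ (u.val < 2 ∧ 2 ≤ v.val) ∨ (v.val < 2 ∧ 2 ≤ u.val) := Iff.rfl

lemma lg_conn {n : ℕ} (hn : 6 ≤ n) : (lowerGraph n).Connected := by
  rw [SimpleGraph.connected_iff]
  have h2n : 2 < n := by omega
  constructor
  · have hreach : ∀ w : Fin n, (lowerGraph n).Reachable w ⟨2, h2n⟩ := by
      intro w
      by_cases hw : w.val < 2
      · exact SimpleGraph.Adj.reachable (by rw [lg_adj]; left; exact ⟨hw, by simp⟩)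
      · by_cases hw2 : w = ⟨2, h2n⟩
        · rw [hw2]
        · have h0n : 0 < n := by omega
          have ha1 : (lowerGraph n).Adj w ⟨0, h0n⟩ := by
            rw [lg_adj]; right; exact ⟨by simp, by omega⟩
          have ha2 : (lowerGraph n).Adj ⟨0, h0n⟩ ⟨2, h2n⟩ := by
            rw [lg_adj]; left; exact ⟨by simp, by simp⟩
          exact ha1.reachable.trans ha2.reachable
    intro u v
    exact (hreach u).trans (hreach v).symm
  · exact ⟨⟨0, by omega⟩⟩

lemma lg_free {n : ℕ} : ¬ ContainsCopy doubleStar22 (lowerGraph n) := by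
  rintro ⟨f, hf⟩
  have hd : ∀ a b : Fin 6, doubleStar22.Adj a b →
      (a = 0 ∧ b = 1) ∨ (a = 1 ∧ b = 0) ∨ (a = 0 ∧ b = 2) ∨ (a = 2 ∧ b = 0) ∨
      (a = 0 ∧ b = 3) ∨ (a = 3 ∧ b = 0) ∨ (a = 1 ∧ b = 4) ∨ (a = 4 ∧ b = 1) ∨
      (a = 1 ∧ b = 5) ∨ (a = 5 ∧ b = 1) := by decide
  have h01 : (lowerGraph n).Adj (f 0) (f 1) := hf (by decide)
  have h02 : (lowerGraph n).Adj (f 0) (f 2) := hf (by decide)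
  have h03 : (lowerGraph n).Adj (f 0) (f 3) := hf (by decide)
  have h14 : (lowerGraph n).Adj (f 1) (f 4) := hf (by decide)
  have h15 : (lowerGraph n).Adj (f 1) (f 5) := hf (by decide)
  rw [lg_adj] at h01 h02 h03 h14 h15
  have hinj : ∀ i j : Fin 6, f i = f j → i = j := fun i j h => f.injective h
  have h04 : f 0 ≠ f 4 := fun h => by have := hinj 0 4 h; exact absurd this (by decide)
  have h05 : f 0 ≠ f 5 := fun h => by have := hinj 0 5 h; exact absurd this (by decide)
  have h45 : f 4 ≠ f 5 := fun h => by have := hinj 4 5 h; exact absurd this (by decide)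
  have h12 : f 1 ≠ f 2 := fun h => by have := hinj 1 2 h; exact absurd this (by decide)
  have h13 : f 1 ≠ f 3 := fun h => by have := hinj 1 3 h; exact absurd this (by decide)
  have h23 : f 2 ≠ f 3 := fun h => by have := hinj 2 3 h; exact absurd this (by decide)
  rcases h01 with ⟨hL0, hR1⟩ | ⟨hL1, hR0⟩
  · -- f 0 left, f 1 right : f 4 and f 5 must be left
    have hf4 : (f 4).val < 2 := by rcases h14 with ⟨h, _⟩ | ⟨h, _⟩ <;> omega
    have hf5 : (f 5).val < 2 := by rcases h15 with ⟨h, _⟩ | ⟨h, _⟩ <;> omega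
    have : (f 0).val = (f 4).val ∨ (f 0).val = (f 5).val ∨ (f 4).val = (f 5).val := by omega
    rcases this with h | h | h
    · exact h04 (Fin.ext h)
    · exact h05 (Fin.ext h)
    · exact h45 (Fin.ext h)
  · -- f 1 left, f 0 right : f 2 and f 3 must be left
    have hf2 : (f 2).val < 2 := by rcases h02 with ⟨h, _⟩ | ⟨h, _⟩ <;> omega
    have hf3 : (f 3).val < 2 := by rcases h03 with ⟨h, _⟩ | ⟨h, _⟩ <;> omega
    have : (f 1).val = (f 2).val ∨ (f 1).val = (f 3).val ∨ (f 2).val = (f 3).val := by omega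
    rcases this with h | h | h
    · exact h12 (Fin.ext h)
    · exact h13 (Fin.ext h)
    · exact h23 (Fin.ext h)

lemma lg_nbr_left {n : ℕ} (u : Fin n) (hu : u.val < 2) :
    (lowerGraph n).neighborFinset u = Finset.univ.filter (fun v : Fin n => 2 ≤ v.val) := by
  ext v
  rw [mem_neighborFinset, lg_adj]
  simp only [Finset.mem_filter, Finset.mem_univ, true_and]
  omega

lemma lg_nbr_right {n : ℕ} (u : Fin n) (hu : 2 ≤ u.val) :
    (lowerGraph n).neighborFinset u = Finset.univ.filter (fun v : Fin n => v.val < 2) := by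
  ext v
  rw [mem_neighborFinset, lg_adj]
  simp only [Finset.mem_filter, Finset.mem_univ, true_and]
  omega

lemma fin_filter_lt2 {n : ℕ} (hn : 6 ≤ n) :
    (Finset.univ.filter (fun v : Fin n => v.val < 2)).card = 2 := by
  have : Finset.univ.filter (fun v : Fin n => v.val < 2) =
      {⟨0, by omega⟩, ⟨1, by omega⟩} := by
    ext v
    simp only [Finset.mem_filter, Finset.mem_univ, true_and, Finset.mem_insert,
      Finset.mem_singleton, Fin.ext_iff]
    omega
  rw [this, Finset.card_insert_of_notMem (by simp [Fin.ext_iff]), Finset.card_singleton]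

lemma fin_filter_ge2 {n : ℕ} (hn : 6 ≤ n) :
    (Finset.univ.filter (fun v : Fin n => 2 ≤ v.val)).card = n - 2 := by
  have h := Finset.card_filter_add_card_filter_not
    (s := (Finset.univ : Finset (Fin n))) (p := fun v : Fin n => v.val < 2)
  have h2 : Finset.univ.filter (fun v : Fin n => ¬ v.val < 2) =
      Finset.univ.filter (fun v : Fin n => 2 ≤ v.val) := by
    ext v
    simp only [Finset.mem_filter, Finset.mem_univ, true_and, not_lt]
  rw [fin_filter_lt2 hn, h2, Finset.card_univ, Fintype.card_fin] at h
  omega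

lemma lg_card {n : ℕ} (hn : 6 ≤ n) : (lowerGraph n).edgeFinset.card = 2 * n - 4 := by
  have hsum : ∑ v, (lowerGraph n).degree v = 2 * (lowerGraph n).edgeFinset.card :=
    (lowerGraph n).sum_degrees_eq_twice_card_edges
  have hsplit := (Finset.sum_filter_add_sum_filter_not Finset.univ
    (fun v : Fin n => v.val < 2) (fun v => (lowerGraph n).degree v)).symm
  have h1 : ∑ v ∈ Finset.univ.filter (fun v : Fin n => v.val < 2),
      (lowerGraph n).degree v = 2 * (n - 2) := by
    have hcongr : ∀ v ∈ Finset.univ.filter (fun v : Fin n => v.val < 2),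
        (lowerGraph n).degree v = n - 2 := by
      intro v hv
      rw [← SimpleGraph.card_neighborFinset_eq_degree,
        lg_nbr_left v (Finset.mem_filter.mp hv).2, fin_filter_ge2 hn]
    rw [Finset.sum_congr rfl hcongr, Finset.sum_const, smul_eq_mul, fin_filter_lt2 hn]
  have h2 : ∑ v ∈ Finset.univ.filter (fun v : Fin n => ¬ v.val < 2),
      (lowerGraph n).degree v = (n - 2) * 2 := by
    have hcongr : ∀ v ∈ Finset.univ.filter (fun v : Fin n => ¬ v.val < 2),
        (lowerGraph n).degree v = 2 := by
      intro v hv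
      have hge : 2 ≤ v.val := by
        have := (Finset.mem_filter.mp hv).2
        omega
      rw [← SimpleGraph.card_neighborFinset_eq_degree, lg_nbr_right v hge, fin_filter_lt2 hn]
    rw [Finset.sum_congr rfl hcongr, Finset.sum_const, smul_eq_mul]
    congr 1
    have h := Finset.card_filter_add_card_filter_not
      (s := (Finset.univ : Finset (Fin n))) (p := fun v : Fin n => v.val < 2)
    rw [fin_filter_lt2 hn, Finset.card_univ, Fintype.card_fin] at h
    omega
  rw [h1, h2] at hsplit
  omega


lemma ncard_eq_edgeFinset_card {n : ℕ} (G : SimpleGraph (Fin n)) [DecidableRel G.Adj] :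
    G.edgeSet.ncard = G.edgeFinset.card := by
  rw [Set.ncard_eq_toFinset_card']
  simp [SimpleGraph.edgeFinset]

/-- Theorem: `ex_c(n, D_{2,2}) = 2n - 4` for every `n ≥ 6`. -/
theorem exConn_doubleStar22 (n : ℕ) (hn : 6 ≤ n) :
    exConn n doubleStar22 = 2 * n - 4 := by
  have hgreat : IsGreatest {m | ∃ G : SimpleGraph (Fin n), G.Connected ∧
      ¬ ContainsCopy doubleStar22 G ∧ m = G.edgeSet.ncard} (2 * n - 4) := by
    constructor
    · exact ⟨lowerGraph n, lg_conn hn, lg_free,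
        by rw [ncard_eq_edgeFinset_card, lg_card hn]⟩
    · rintro m ⟨G, hconn, hfree, rfl⟩
      letI : DecidableRel G.Adj := Classical.decRel _
      rw [ncard_eq_edgeFinset_card]
      exact upper G hn hconn hfree
  exact hgreat.csSup_eq
end
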